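/- arXiv:math/0310356 — 6 statements merged into one kernel-verified Lean document; each statement's English description precedes it below -/
import Mathlib

section
/- Let G be a group with a length function ℓ, and let P be a real polynomial such that for every r ≥ 0 and all nonnegative f, g, h ∈ ℂG with the support of f contained in B_ℓ(e,r), one has (f*g*h)(e) ≤ P(r)·‖f‖₂·‖g‖₂·‖h‖₂. Then for every r ≥ 0 and every nonnegative f ∈ ℂG whose support is contained in B_ℓ(e,r), one has ‖f‖_* ≤ 2·P(r)·‖f‖₂. -/
open scoped BigOperators ComplexOrder

/-- The ℓ²-norm of a finitely supported function `f : G → ℂ`. -/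
noncomputable def l2norm {G : Type*} [Group G] (f : MonoidAlgebra ℂ G) : ℝ :=
  Real.sqrt (∑ γ ∈ f.coeff.support, ‖f.coeff γ‖ ^ 2)

/-- The operator norm of left convolution by `f` on `ℓ²(G)`. -/
noncomputable def opNorm {G : Type*} [Group G] (f : MonoidAlgebra ℂ G) : ℝ :=
  sSup {c : ℝ | ∃ g : MonoidAlgebra ℂ G, l2norm g = 1 ∧ c = l2norm (f * g)}

/-- The weighted ℓ²-norm `‖f‖_{ℓ,s}`. -/
noncomputable def sobolevNorm {G : Type*} [Group G] (ℓ : G → ℝ) (s : ℝ)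
    (f : MonoidAlgebra ℂ G) : ℝ :=
  Real.sqrt (∑ γ ∈ f.coeff.support, ‖f.coeff γ‖ ^ 2 * (1 + ℓ γ) ^ (2 * s))

/-- `ℓ` is a length function on the group `G`. -/
def IsLengthFunction {G : Type*} [Group G] (ℓ : G → ℝ) : Prop :=
  ℓ 1 = 0 ∧ (∀ γ, 0 ≤ ℓ γ) ∧ (∀ γ : G, ℓ γ⁻¹ = ℓ γ) ∧ ∀ γ μ : G, ℓ (γ * μ) ≤ ℓ γ + ℓ μ

/-- `G` has property RD with respect to the length function `ℓ`. -/
def PropertyRD {G : Type*} [Group G] (ℓ : G → ℝ) : Prop :=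
  ∃ C s : ℝ, 0 < C ∧ 0 < s ∧ ∀ f : MonoidAlgebra ℂ G, opNorm f ≤ C * sobolevNorm ℓ s f

section helper
variable {G : Type*} [Group G]

lemma l2norm_eq_sum (f : MonoidAlgebra ℂ G) {s : Finset G}
    (hs : f.coeff.support ⊆ s) : l2norm f = Real.sqrt (∑ γ ∈ s, ‖f.coeff γ‖ ^ 2) := by
  rw [l2norm, Finset.sum_subset hs]
  intro x _ hx
  simp [Finsupp.notMem_support_iff.mp hx]

lemma l2norm_sq (f : MonoidAlgebra ℂ G) {s : Finset G}
    (hs : f.coeff.support ⊆ s) : l2norm f ^ 2 = ∑ γ ∈ s, ‖f.coeff γ‖ ^ 2 := by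
  rw [l2norm_eq_sum f hs, Real.sq_sqrt]; positivity

lemma mul_one_apply' (p q : MonoidAlgebra ℂ G) :
    (p * q).coeff 1 = ∑ a ∈ p.coeff.support, p.coeff a * q.coeff a⁻¹ := by
  classical
  rw [MonoidAlgebra.coeff_mul, Finsupp.sum]
  refine Finset.sum_congr rfl fun a _ => ?_
  rw [Finsupp.sum]
  have : ∀ b : G, (a * b = 1) = (b = a⁻¹) := by
    intro b; simp [eq_comm, mul_eq_one_iff_inv_eq, eq_comm (a := a⁻¹)]
  simp only [this]
  rw [Finset.sum_ite_eq' q.coeff.support a⁻¹ (fun b => p.coeff a * q.coeff b)]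
  split_ifs with hmem
  · rfl
  · rw [Finsupp.notMem_support_iff.mp hmem, mul_zero]

lemma l2norm_one : l2norm (1 : MonoidAlgebra ℂ G) = 1 := by
  classical
  rw [l2norm]
  have h1 : (1 : MonoidAlgebra ℂ G).coeff = Finsupp.single 1 1 := rfl
  rw [h1, Finsupp.support_single_ne_zero _ one_ne_zero]
  simp

end helper

/-- If for all nonnegative `f, g, h ∈ ℂG` with `supp f ⊆ B_ℓ(e,r)` one has
`(f*g*h)(e) ≤ P(r)·‖f‖₂·‖g‖₂·‖h‖₂`, then every nonnegative `f ∈ ℂG` supported in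
`B_ℓ(e,r)` satisfies `‖f‖_* ≤ 2·P(r)·‖f‖₂`. -/


theorem triple_bound_implies_opnorm_bound {G : Type*} [Group G] (ℓ : G → ℝ)
    (hℓ : IsLengthFunction ℓ) (P : Polynomial ℝ)
    (h : ∀ r : ℝ, 0 ≤ r → ∀ f g h' : MonoidAlgebra ℂ G,
      (∀ γ : G, 0 ≤ f.coeff γ) → (∀ γ : G, 0 ≤ g.coeff γ) → (∀ γ : G, 0 ≤ h'.coeff γ) →
      (∀ γ : G, f.coeff γ ≠ 0 → ℓ γ ≤ r) →
      (f * g * h').coeff 1 ≤ ((P.eval r * l2norm f * l2norm g * l2norm h' : ℝ) : ℂ)) :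
    ∀ r : ℝ, 0 ≤ r → ∀ f : MonoidAlgebra ℂ G, (∀ γ : G, 0 ≤ f.coeff γ) →
      (∀ γ : G, f.coeff γ ≠ 0 → ℓ γ ≤ r) → opNorm f ≤ 2 * P.eval r * l2norm f := by
  
  intro r hr f hf hsupp
  have hℓ1 : ℓ 1 = 0 := hℓ.1
  classical
  -- Step 0 : 1 ≤ P.eval r
  have hP1 : 1 ≤ P.eval r := by
    have hone : ∀ γ : G, 0 ≤ (1 : MonoidAlgebra ℂ G).coeff γ := by
      intro γ
      have : (1 : MonoidAlgebra ℂ G).coeff γ = Finsupp.single (1:G) (1:ℂ) γ := rfl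
      rw [this, Finsupp.single_apply]
      split_ifs <;> simp
    have hsupp1 : ∀ γ : G, (1 : MonoidAlgebra ℂ G).coeff γ ≠ 0 → ℓ γ ≤ r := by
      intro γ hγ
      have : γ = 1 := by
        by_contra hc
        exact hγ (by rw [show (1 : MonoidAlgebra ℂ G).coeff γ = Finsupp.single (1:G) (1:ℂ) γ from rfl,
          Finsupp.single_apply, if_neg (fun hh => hc hh.symm)])
      rw [this, hℓ1]; exact hr
    have := h r hr 1 1 1 hone hone hone hsupp1
    rw [one_mul, one_mul] at this
    have h11 : ((1 : MonoidAlgebra ℂ G).coeff 1 : ℂ) = 1 := by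
      rw [show (1 : MonoidAlgebra ℂ G).coeff 1 = Finsupp.single (1:G) (1:ℂ) 1 from rfl]; simp
    rw [h11, l2norm_one] at this
    have h2 : (1:ℝ) ≤ P.eval r * 1 * 1 * 1 := by exact_mod_cast this
    linarith
  have hP0 : 0 ≤ P.eval r := by linarith
  -- Step 1 : each element of the set is bounded
  have key : ∀ g : MonoidAlgebra ℂ G, l2norm g = 1 → l2norm (f * g) ≤ P.eval r * l2norm f := by
    intro g hg1
    have hfn : 0 ≤ l2norm f := Real.sqrt_nonneg _
    set gabs : MonoidAlgebra ℂ G := MonoidAlgebra.ofCoeff (Finsupp.mapRange (fun z => (‖z‖ : ℂ)) (by simp) g.coeff) with hgabs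
    have hgabs_apply : ∀ γ, gabs.coeff γ = (‖g.coeff γ‖ : ℂ) := fun γ => Finsupp.mapRange_apply (hf := by simp)
    have hgabs_supp : gabs.coeff.support = g.coeff.support := by
      ext γ; simp [Finsupp.mem_support_iff, hgabs_apply]
    -- value formula for f * gabs
    set S : G → ℝ := fun x => ∑ a ∈ f.coeff.support, ∑ b ∈ g.coeff.support,
      if a * b = x then ‖f.coeff a‖ * ‖g.coeff b‖ else 0 with hS
    have hSnn : ∀ x, 0 ≤ S x := by
      intro x
      refine Finset.sum_nonneg fun a _ => Finset.sum_nonneg fun b _ => ?_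
      split_ifs <;> positivity
    have hval : ∀ x, (f * gabs).coeff x = ((S x : ℝ) : ℂ) := by
      intro x
      rw [MonoidAlgebra.coeff_mul, Finsupp.sum, hS]
      push_cast
      rw [Finset.sum_congr rfl (fun a _ => ?_)]
      rw [Finsupp.sum, hgabs_supp]
      refine Finset.sum_congr rfl fun b _ => ?_
      rw [hgabs_apply]
      split_ifs
      · conv_lhs => rw [Complex.eq_coe_norm_of_nonneg (hf a)]
        push_cast; ring
      · rfl
    set p := f * gabs with hp
    have hpnn : ∀ x, 0 ≤ p.coeff x := fun x => by
      rw [hval x]; exact Complex.zero_le_real.mpr (hSnn x)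
    have hpnorm : ∀ x, ‖p.coeff x‖ = S x := fun x => by
      rw [hval x, Complex.norm_real, Real.norm_of_nonneg (hSnn x)]
    -- pointwise domination
    have hdom : ∀ x, ‖(f * g).coeff x‖ ≤ ‖p.coeff x‖ := by
      intro x
      rw [hpnorm x, MonoidAlgebra.coeff_mul, Finsupp.sum]
      refine le_trans (norm_sum_le _ _) (Finset.sum_le_sum fun a _ => ?_)
      rw [Finsupp.sum]
      refine le_trans (norm_sum_le _ _) (le_of_eq (Finset.sum_congr rfl fun b _ => ?_))
      split_ifs <;> simp
    -- l2norm (f*g) ≤ l2norm p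
    have hle : l2norm (f * g) ≤ l2norm p := by
      rw [l2norm_eq_sum (f*g) (Finset.subset_union_left (s₂ := p.coeff.support)),
          l2norm_eq_sum p (Finset.subset_union_right (s₁ := (f*g).coeff.support))]
      refine Real.sqrt_le_sqrt (Finset.sum_le_sum fun x _ => ?_)
      exact pow_le_pow_left₀ (norm_nonneg _) (hdom x) 2
    -- gabs norms
    have hgabs_norm : l2norm gabs = 1 := by
      rw [l2norm, hgabs_supp, ← hg1, l2norm]
      congr 1
      refine Finset.sum_congr rfl fun γ _ => ?_
      rw [hgabs_apply, Complex.norm_real, norm_norm]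
    -- construct h'
    set h' : MonoidAlgebra ℂ G := MonoidAlgebra.ofCoeff (Finsupp.equivMapDomain (Equiv.inv G) p.coeff) with hh'
    have hh'apply : ∀ γ : G, h'.coeff γ = p.coeff γ⁻¹ := by
      intro γ; rw [hh']; rfl
    have hh'nn : ∀ γ, 0 ≤ h'.coeff γ := fun γ => by rw [hh'apply]; exact hpnn _
    have hh'supp : h'.coeff.support ⊆ p.coeff.support.image (fun a => a⁻¹) := by
      intro γ hγ
      rw [Finsupp.mem_support_iff, hh'apply] at hγ
      exact Finset.mem_image.mpr ⟨γ⁻¹, Finsupp.mem_support_iff.mpr hγ, inv_inv γ⟩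
    set L := l2norm p with hL
    have hLnn : 0 ≤ L := Real.sqrt_nonneg _
    have hh'norm : l2norm h' = L := by
      rw [l2norm_eq_sum h' hh'supp, Finset.sum_image (fun a _ b _ hab => inv_injective hab),
        hL, l2norm]
      congr 1
      refine Finset.sum_congr rfl fun a _ => ?_
      rw [hh'apply, inv_inv]
    -- apply the hypothesis
    have hmain := h r hr f gabs h' hf (fun γ => by
        rw [hgabs_apply]; exact Complex.zero_le_real.mpr (norm_nonneg _)) hh'nn hsupp
    rw [← hp] at hmain
    rw [mul_one_apply' p h'] at hmain
    have hlhs : (∑ a ∈ p.coeff.support, p.coeff a * h'.coeff a⁻¹) = ((L^2 : ℝ) : ℂ) := by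
      have hterm : ∀ a ∈ p.coeff.support, p.coeff a * h'.coeff a⁻¹ = ((‖p.coeff a‖^2 : ℝ) : ℂ) := by
        intro a _
        rw [hh'apply, inv_inv]
        conv_lhs => rw [Complex.eq_coe_norm_of_nonneg (hpnn a)]
        push_cast; ring
      rw [Finset.sum_congr rfl hterm, ← Complex.ofReal_sum, l2norm_sq p (le_refl p.coeff.support)]
    rw [hlhs, hgabs_norm, hh'norm, mul_one] at hmain
    have hreal : L ^ 2 ≤ P.eval r * l2norm f * L := Complex.real_le_real.mp hmain
    have hLbound : L ≤ P.eval r * l2norm f := by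
      rcases eq_or_lt_of_le hLnn with hL0 | hL0
      · rw [← hL0]; exact mul_nonneg hP0 hfn
      · nlinarith
    exact hle.trans hLbound
  -- Step 2 : conclude about sSup
  rw [opNorm]
  have hfn : 0 ≤ l2norm f := Real.sqrt_nonneg _
  have hb : 0 ≤ 2 * P.eval r * l2norm f := by
    apply mul_nonneg (by linarith) hfn
  refine Real.sSup_le ?_ hb
  rintro c ⟨g, hg1, rfl⟩
  have hk := key g hg1
  nlinarith
end

section
/- Let G be a group with a length function ℓ, and let P be a real polynomial such that for every r ≥ 0 the ball B_ℓ(e,r) is finite of cardinality at most P(r) (G has polynomial growth with respect to ℓ). Then for every r ≥ 0 and every f ∈ ℂG whose support is contained in B_ℓ(e,r), one has ‖f‖_* ≤ ‖f‖₁ ≤ √(P(r))·‖f‖₂; in particular G has property RD with respect to ℓ. -/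
open scoped BigOperators ComplexOrder

/-- The ℓ¹-norm of a finitely supported function `f : G → ℂ`. -/
noncomputable def l1norm {G : Type*} [Group G] (f : MonoidAlgebra ℂ G) : ℝ :=
  ∑ γ ∈ f.coeff.support, ‖f.coeff γ‖

section Aux
variable {G : Type*} [Group G]

lemma l2norm_nonneg (f : MonoidAlgebra ℂ G) : 0 ≤ l2norm f := Real.sqrt_nonneg _

lemma l1norm_nonneg (f : MonoidAlgebra ℂ G) : 0 ≤ l1norm f :=
  Finset.sum_nonneg fun _ _ => norm_nonneg _

lemma l2norm_eq_of_subset {f : MonoidAlgebra ℂ G} {T : Finset G} (h : f.coeff.support ⊆ T) :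
    l2norm f = Real.sqrt (∑ γ ∈ T, ‖f.coeff γ‖ ^ 2) := by
  unfold l2norm
  congr 1
  refine Finset.sum_subset h fun x _ hx => ?_
  simp [Finsupp.notMem_support_iff.mp hx]

/-- Restriction to a finset, as a linear map into Euclidean space. -/
noncomputable def restrMap (T : Finset G) :
    MonoidAlgebra ℂ G →ₗ[ℂ] EuclideanSpace ℂ T where
  toFun a := (WithLp.equiv 2 (T → ℂ)).symm fun γ => a.coeff ↑γ
  map_add' a b := by ext γ; exact Finsupp.add_apply a.coeff b.coeff γ
  map_smul' c a := by ext γ; exact Finsupp.smul_apply c a.coeff γ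

lemma norm_restrMap {T : Finset G} {a : MonoidAlgebra ℂ G} (h : a.coeff.support ⊆ T) :
    ‖restrMap T a‖ = l2norm a := by
  rw [l2norm_eq_of_subset h, EuclideanSpace.norm_eq]
  congr 1
  rw [← Finset.sum_attach T fun γ => ‖a.coeff γ‖ ^ 2]
  rfl

lemma l2norm_sum_le {ι : Type*} (s : Finset ι) (h : ι → MonoidAlgebra ℂ G) :
    l2norm (∑ i ∈ s, h i) ≤ ∑ i ∈ s, l2norm (h i) := by
  classical
  set T := s.biUnion fun i => (h i).coeff.support with hT
  have hsupp : (∑ i ∈ s, h i).coeff.support ⊆ T := by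
    rw [MonoidAlgebra.coeff_sum]; exact Finsupp.support_finset_sum
  have hsub : ∀ i ∈ s, (h i).coeff.support ⊆ T := fun i hi =>
    fun x hx => Finset.mem_biUnion.mpr ⟨i, hi, hx⟩
  rw [← norm_restrMap hsupp, map_sum]
  refine (norm_sum_le _ _).trans_eq ?_
  exact Finset.sum_congr rfl fun i hi => norm_restrMap (hsub i hi)

lemma l2norm_single_mul (μ : G) (c : ℂ) (g : MonoidAlgebra ℂ G) :
    l2norm (MonoidAlgebra.single μ c * g) = ‖c‖ * l2norm g := by
  classical
  have hsub : (MonoidAlgebra.single μ c * g).coeff.support ⊆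
      g.coeff.support.map ⟨(μ * ·), fun a b hab => by simpa using hab⟩ := by
    intro x hx
    rw [Finsupp.mem_support_iff, MonoidAlgebra.single_mul_apply] at hx
    have hgx : g.coeff (μ⁻¹ * x) ≠ 0 := fun h0 => hx (by rw [h0, mul_zero])
    simp only [Finset.mem_map, Function.Embedding.coeFn_mk]
    exact ⟨μ⁻¹ * x, Finsupp.mem_support_iff.mpr hgx, mul_inv_cancel_left μ x⟩
  rw [l2norm_eq_of_subset hsub, Finset.sum_map]
  simp only [Function.Embedding.coeFn_mk, MonoidAlgebra.single_mul_apply,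
    inv_mul_cancel_left, norm_mul, mul_pow]
  rw [← Finset.mul_sum, Real.sqrt_mul (by positivity), Real.sqrt_sq (norm_nonneg c)]
  congr 1
  unfold l2norm
  congr 1
  refine Finset.sum_congr rfl fun i _ => ?_
  show ‖g.coeff (μ⁻¹ * (μ * i))‖ ^ 2 = _
  rw [inv_mul_cancel_left]

lemma opNorm_le_l1norm (f : MonoidAlgebra ℂ G) : opNorm f ≤ l1norm f := by
  refine Real.sSup_le ?_ (l1norm_nonneg f)
  rintro c ⟨g, hg, rfl⟩
  have hf : (∑ μ ∈ f.coeff.support, MonoidAlgebra.single μ (f.coeff μ)) = f := MonoidAlgebra.sum_single f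
  have hfg : f * g = ∑ μ ∈ f.coeff.support, MonoidAlgebra.single μ (f.coeff μ) * g := by
    rw [← Finset.sum_mul, hf]
  calc l2norm (f * g) ≤ ∑ μ ∈ f.coeff.support, l2norm (MonoidAlgebra.single μ (f.coeff μ) * g) := by
        rw [hfg]; exact l2norm_sum_le _ _
    _ = ∑ μ ∈ f.coeff.support, ‖f.coeff μ‖ := by
        refine Finset.sum_congr rfl fun μ _ => ?_
        rw [l2norm_single_mul, hg, mul_one]
    _ = l1norm f := rfl

lemma l1norm_le_sqrt_card (f : MonoidAlgebra ℂ G) :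
    l1norm f ≤ Real.sqrt (f.coeff.support.card) * l2norm f := by
  have h := Real.sum_mul_le_sqrt_mul_sqrt f.coeff.support (fun γ => ‖f.coeff γ‖) (fun _ => 1)
  simp only [mul_one, one_pow] at h
  calc l1norm f ≤ Real.sqrt (∑ γ ∈ f.coeff.support, ‖f.coeff γ‖ ^ 2)
        * Real.sqrt (∑ _γ ∈ f.coeff.support, (1:ℝ)) := h
    _ = Real.sqrt (f.coeff.support.card) * l2norm f := by
        rw [Finset.sum_const, nsmul_eq_mul, mul_one, mul_comm]
        rfl

end Aux

/-- ∑ 1/(n+1)² ≤ 2. -/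
lemma sum_inv_sq_le (N : ℕ) : ∑ n ∈ Finset.range N, (((n : ℝ) + 1) ^ 2)⁻¹ ≤ 2 := by
  have h : ∀ M : ℕ, ∑ n ∈ Finset.range M, (((n : ℝ) + 1) ^ 2)⁻¹ ≤ 2 - ((M : ℝ))⁻¹ := by
    intro M
    induction M with
    | zero => norm_num
    | succ k ih =>
      rw [Finset.sum_range_succ]
      rcases Nat.eq_zero_or_pos k with hk0 | hk0
      · subst hk0; norm_num
      have hk : (1:ℝ) ≤ (k:ℝ) := by exact_mod_cast hk0
      have key : (((k:ℝ) + 1) ^ 2)⁻¹ ≤ ((k:ℝ))⁻¹ - ((k:ℝ) + 1)⁻¹ := by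
        rw [inv_sub_inv (by linarith) (by positivity : ((k:ℝ)+1) ≠ 0)]
        rw [inv_eq_one_div, div_le_div_iff₀ (by positivity) (by positivity)]
        nlinarith
      push_cast
      linarith
  refine (h N).trans ?_
  have : (0:ℝ) ≤ ((N : ℝ))⁻¹ := by positivity
  linarith

/-- Crude polynomial bound on `[1, ∞)`. -/
lemma poly_eval_le (P : Polynomial ℝ) {x : ℝ} (hx : 1 ≤ x) :
    P.eval x ≤ (∑ i ∈ Finset.range (P.natDegree + 1), |P.coeff i|) * x ^ P.natDegree := by
  rw [Polynomial.eval_eq_sum_range, Finset.sum_mul]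
  refine Finset.sum_le_sum fun i hi => ?_
  have hx0 : (0:ℝ) ≤ x := by linarith
  have h1 : P.coeff i * x ^ i ≤ |P.coeff i| * x ^ i :=
    mul_le_mul_of_nonneg_right (le_abs_self _) (by positivity)
  refine h1.trans (mul_le_mul_of_nonneg_left ?_ (abs_nonneg _))
  exact pow_le_pow_right₀ hx (Finset.mem_range_succ_iff.mp hi)

/-- Uniform bound on the weight sums, from polynomial growth. -/
lemma weight_sum_le {G : Type*} [Group G] (ℓ : G → ℝ) (hpos : ∀ γ, 0 ≤ ℓ γ)
    (P : Polynomial ℝ)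
    (hgrowth : ∀ r : ℝ, 0 ≤ r → {γ : G | ℓ γ ≤ r}.Finite ∧
      ({γ : G | ℓ γ ≤ r}.ncard : ℝ) ≤ P.eval r) (S : Finset G) :
    ∑ γ ∈ S, ((1 + ℓ γ) ^ (P.natDegree + 2))⁻¹ ≤
      2 * ∑ i ∈ Finset.range (P.natDegree + 1), |P.coeff i| := by
  classical
  set d := P.natDegree with hd
  set A := ∑ i ∈ Finset.range (d + 1), |P.coeff i| with hA
  have hA0 : 0 ≤ A := Finset.sum_nonneg fun _ _ => abs_nonneg _
  set N := S.sup fun γ => ⌊ℓ γ⌋₊ with hN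
  have hmaps : ∀ γ ∈ S, ⌊ℓ γ⌋₊ ∈ Finset.range (N + 1) := fun γ hγ =>
    Finset.mem_range_succ_iff.mpr (Finset.le_sup (f := fun γ => ⌊ℓ γ⌋₊) hγ)
  rw [← Finset.sum_fiberwise_of_maps_to hmaps]
  have inner : ∀ n ∈ Finset.range (N + 1),
      ∑ γ ∈ S.filter (fun γ => ⌊ℓ γ⌋₊ = n), ((1 + ℓ γ) ^ (d + 2))⁻¹ ≤
        A * (((n:ℝ) + 1) ^ 2)⁻¹ := by
    intro n _
    set F := S.filter (fun γ => ⌊ℓ γ⌋₊ = n) with hF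
    have hxn : (0:ℝ) < (n:ℝ) + 1 := by positivity
    have hterm : ∀ γ ∈ F, ((1 + ℓ γ) ^ (d + 2))⁻¹ ≤ (((n:ℝ) + 1) ^ (d + 2))⁻¹ := by
      intro γ hγ
      have hfl : ⌊ℓ γ⌋₊ = n := (Finset.mem_filter.mp hγ).2
      have hn : (n:ℝ) ≤ ℓ γ := by
        have h2 := Nat.floor_le (hpos γ)
        rw [hfl] at h2
        exact h2
      have hp : (0:ℝ) < ((n:ℝ) + 1) ^ (d + 2) := by positivity
      refine inv_anti₀ hp ?_
      exact pow_le_pow_left₀ (by positivity) (by linarith) _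
    have hstep : ∑ γ ∈ F, ((1 + ℓ γ) ^ (d + 2))⁻¹
        ≤ (F.card : ℝ) * (((n:ℝ) + 1) ^ (d + 2))⁻¹ := by
      calc _ ≤ ∑ _γ ∈ F, (((n:ℝ) + 1) ^ (d + 2))⁻¹ := Finset.sum_le_sum hterm
        _ = _ := by rw [Finset.sum_const, nsmul_eq_mul]
    have hb := hgrowth ((n:ℝ) + 1) (by positivity)
    have hcard : (F.card : ℝ) ≤ P.eval ((n:ℝ) + 1) := by
      have hsub : ↑F ⊆ {γ : G | ℓ γ ≤ (n:ℝ) + 1} := by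
        intro γ hγ
        have hγ' : γ ∈ F := hγ
        have hfl : ⌊ℓ γ⌋₊ = n := (Finset.mem_filter.mp hγ').2
        have hlt : ℓ γ < (⌊ℓ γ⌋₊ : ℝ) + 1 := Nat.lt_floor_add_one _
        rw [hfl] at hlt
        exact le_of_lt hlt
      have h2 := Set.ncard_le_ncard hsub hb.1
      calc (F.card : ℝ) = ((↑F : Set G).ncard : ℝ) := by rw [Set.ncard_coe_finset]
        _ ≤ ({γ : G | ℓ γ ≤ (n:ℝ) + 1}.ncard : ℝ) := by exact_mod_cast h2
        _ ≤ P.eval ((n:ℝ) + 1) := hb.2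
    have heval : P.eval ((n:ℝ) + 1) ≤ A * ((n:ℝ) + 1) ^ d :=
      poly_eval_le P (by linarith [Nat.cast_nonneg (α := ℝ) n])
    calc ∑ γ ∈ F, ((1 + ℓ γ) ^ (d + 2))⁻¹
        ≤ (F.card : ℝ) * (((n:ℝ) + 1) ^ (d + 2))⁻¹ := hstep
      _ ≤ (A * ((n:ℝ) + 1) ^ d) * (((n:ℝ) + 1) ^ (d + 2))⁻¹ :=
          mul_le_mul_of_nonneg_right (hcard.trans heval) (by positivity)
      _ = A * (((n:ℝ) + 1) ^ 2)⁻¹ := by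
          rw [pow_add]
          field_simp
  calc ∑ n ∈ Finset.range (N + 1), ∑ γ ∈ S.filter (fun γ => ⌊ℓ γ⌋₊ = n),
        ((1 + ℓ γ) ^ (d + 2))⁻¹
      ≤ ∑ n ∈ Finset.range (N + 1), A * (((n:ℝ) + 1) ^ 2)⁻¹ := Finset.sum_le_sum inner
    _ = A * ∑ n ∈ Finset.range (N + 1), (((n:ℝ) + 1) ^ 2)⁻¹ := by rw [Finset.mul_sum]
    _ ≤ A * 2 := mul_le_mul_of_nonneg_left (sum_inv_sq_le _) hA0
    _ = 2 * A := mul_comm _ _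

/-- If `G` has polynomial growth with respect to `ℓ`, i.e. every ball
`B_ℓ(e,r)` is finite with cardinality at most `P(r)`, then every `f ∈ ℂG` supported in
`B_ℓ(e,r)` satisfies `‖f‖_* ≤ ‖f‖₁ ≤ √(P(r))·‖f‖₂`; in particular `G` has property RD
with respect to `ℓ`. -/
theorem polynomial_growth_implies_rd {G : Type*} [Group G] (ℓ : G → ℝ)
    (hℓ : IsLengthFunction ℓ) (P : Polynomial ℝ)
    (hgrowth : ∀ r : ℝ, 0 ≤ r → {γ : G | ℓ γ ≤ r}.Finite ∧
      ({γ : G | ℓ γ ≤ r}.ncard : ℝ) ≤ P.eval r) :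
    (∀ r : ℝ, 0 ≤ r → ∀ f : MonoidAlgebra ℂ G, (∀ γ : G, f.coeff γ ≠ 0 → ℓ γ ≤ r) →
      opNorm f ≤ l1norm f ∧ l1norm f ≤ Real.sqrt (P.eval r) * l2norm f) ∧
    PropertyRD ℓ := by
  classical
  obtain ⟨hℓ1, hℓpos, hℓinv, hℓmul⟩ := hℓ
  constructor
  · intro r hr f hsupp
    refine ⟨opNorm_le_l1norm f, ?_⟩
    have hb := hgrowth r hr
    have hcard : (f.coeff.support.card : ℝ) ≤ P.eval r := by
      have hsub : ↑f.coeff.support ⊆ {γ : G | ℓ γ ≤ r} := fun γ hγ =>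
        hsupp γ (Finsupp.mem_support_iff.mp hγ)
      have h2 := Set.ncard_le_ncard hsub hb.1
      calc (f.coeff.support.card : ℝ) = ((↑f.coeff.support : Set G).ncard : ℝ) := by
            rw [Set.ncard_coe_finset]
        _ ≤ ({γ : G | ℓ γ ≤ r}.ncard : ℝ) := by exact_mod_cast h2
        _ ≤ P.eval r := hb.2
    refine (l1norm_le_sqrt_card f).trans ?_
    exact mul_le_mul_of_nonneg_right (Real.sqrt_le_sqrt hcard) (l2norm_nonneg f)
  · set d := P.natDegree with hd
    set A := ∑ i ∈ Finset.range (d + 1), |P.coeff i| with hA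
    have hA1 : (1:ℝ) ≤ A := by
      have h0 := hgrowth 0 le_rfl
      have hmem : (1:G) ∈ {γ : G | ℓ γ ≤ 0} := by simp [Set.mem_setOf_eq, hℓ1]
      have hpos : 0 < {γ : G | ℓ γ ≤ 0}.ncard := (Set.ncard_pos h0.1).mpr ⟨1, hmem⟩
      have h1 : (1:ℝ) ≤ ({γ : G | ℓ γ ≤ 0}.ncard : ℝ) := by exact_mod_cast hpos
      have h2 : P.eval 0 ≤ A := by
        rw [← Polynomial.coeff_zero_eq_eval_zero]
        refine (le_abs_self _).trans ?_
        exact Finset.single_le_sum (f := fun i => |P.coeff i|)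
          (fun i _ => abs_nonneg _) (Finset.mem_range.mpr (Nat.succ_pos d))
      linarith [h0.2]
    set s : ℝ := ((d:ℝ) + 2) / 2 with hs
    refine ⟨Real.sqrt (2 * A), s, Real.sqrt_pos.mpr (by linarith), by positivity, ?_⟩
    intro f
    refine (opNorm_le_l1norm f).trans ?_
    have hx : ∀ γ : G, (0:ℝ) < 1 + ℓ γ := fun γ => by have := hℓpos γ; linarith
    have h := Real.sum_mul_le_sqrt_mul_sqrt f.coeff.support
      (fun γ => ‖f.coeff γ‖ * (1 + ℓ γ) ^ s) (fun γ => (1 + ℓ γ) ^ (-s))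
    have hLHS : ∀ γ : G, (‖f.coeff γ‖ * (1 + ℓ γ) ^ s) * (1 + ℓ γ) ^ (-s) = ‖f.coeff γ‖ := by
      intro γ
      rw [mul_assoc, ← Real.rpow_add (hx γ), add_neg_cancel, Real.rpow_zero, mul_one]
    have h1 : ∑ γ ∈ f.coeff.support, (‖f.coeff γ‖ * (1 + ℓ γ) ^ s) ^ 2
        = ∑ γ ∈ f.coeff.support, ‖f.coeff γ‖ ^ 2 * (1 + ℓ γ) ^ (2 * s) := by
      refine Finset.sum_congr rfl fun γ _ => ?_
      rw [mul_pow]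
      congr 1
      rw [← Real.rpow_natCast ((1 + ℓ γ) ^ s) 2, ← Real.rpow_mul (hx γ).le]
      norm_num [mul_comm]
    have h2 : ∑ γ ∈ f.coeff.support, ((1 + ℓ γ) ^ (-s)) ^ 2 ≤ 2 * A := by
      have heq : ∀ γ : G, ((1 + ℓ γ) ^ (-s)) ^ 2 = ((1 + ℓ γ) ^ (d + 2))⁻¹ := by
        intro γ
        rw [← Real.rpow_natCast ((1 + ℓ γ) ^ (-s)) 2, ← Real.rpow_mul (hx γ).le]
        rw [show -s * ((2:ℕ):ℝ) = -((d:ℝ) + 2) by push_cast; rw [hs]; ring,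
          Real.rpow_neg (hx γ).le]
        congr 1
        rw [← Real.rpow_natCast (1 + ℓ γ) (d + 2)]
        congr 1
        push_cast
        ring
      rw [Finset.sum_congr rfl fun γ _ => heq γ]
      exact weight_sum_le ℓ hℓpos P hgrowth f.coeff.support
    calc l1norm f
        = ∑ γ ∈ f.coeff.support, (‖f.coeff γ‖ * (1 + ℓ γ) ^ s) * (1 + ℓ γ) ^ (-s) :=
          (Finset.sum_congr rfl fun γ _ => hLHS γ).symm
      _ ≤ Real.sqrt (∑ γ ∈ f.coeff.support, (‖f.coeff γ‖ * (1 + ℓ γ) ^ s) ^ 2)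
          * Real.sqrt (∑ γ ∈ f.coeff.support, ((1 + ℓ γ) ^ (-s)) ^ 2) := h
      _ = sobolevNorm ℓ s f * Real.sqrt (∑ γ ∈ f.coeff.support, ((1 + ℓ γ) ^ (-s)) ^ 2) := by
          unfold sobolevNorm
          rw [h1]
      _ ≤ sobolevNorm ℓ s f * Real.sqrt (2 * A) :=
          mul_le_mul_of_nonneg_left (Real.sqrt_le_sqrt h2) (Real.sqrt_nonneg _)
      _ = Real.sqrt (2 * A) * sobolevNorm ℓ s f := mul_comm _ _
end

section
/- Let G be a group with a length function ℓ. Suppose that ‖f‖_* = ‖f‖₁ for every nonnegative f ∈ ℂG (Kesten's characterization: this holds exactly when G is amenable), and suppose there is a real polynomial P such that for every r ≥ 0 and every nonnegative f ∈ ℂG whose support is contained in B_ℓ(e,r), one has ‖f‖_* ≤ P(r)·‖f‖₂. Then for every r ≥ 0 the ball B_ℓ(e,r) is finite with cardinality at most P(r)²; that is, G has polynomial growth with respect to ℓ, with growth bounded by P². -/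
open scoped BigOperators ComplexOrder

theorem amenable_rd_aux {G : Type*} [Group G] (ℓ : G → ℝ)
    (hKesten : ∀ f : MonoidAlgebra ℂ G, (∀ γ : G, 0 ≤ f.coeff γ) → opNorm f = l1norm f)
    (P : Polynomial ℝ)
    (h : ∀ r : ℝ, 0 ≤ r → ∀ f : MonoidAlgebra ℂ G, (∀ γ : G, 0 ≤ f.coeff γ) →
      (∀ γ : G, f.coeff γ ≠ 0 → ℓ γ ≤ r) → opNorm f ≤ P.eval r * l2norm f)
    (r : ℝ) (hr : 0 ≤ r) (s : Finset G) (hs : ∀ γ ∈ s, ℓ γ ≤ r) :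
    (s.card : ℝ) ≤ (P.eval r) ^ 2 := by
  classical
  set f : MonoidAlgebra ℂ G :=
    MonoidAlgebra.ofCoeff ⟨s, fun γ => if γ ∈ s then (1 : ℂ) else 0, by
      intro a; by_cases ha : a ∈ s <;> simp [ha]⟩ with hf
  have happ : ∀ γ, f.coeff γ = if γ ∈ s then (1 : ℂ) else 0 := fun γ => rfl
  have hsupp : f.coeff.support = s := rfl
  have hpos : ∀ γ : G, 0 ≤ f.coeff γ := by
    intro γ; rw [happ]; split
    · exact zero_le_one
    · exact le_refl _
  have hsub : ∀ γ : G, f.coeff γ ≠ 0 → ℓ γ ≤ r := by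
    intro γ hγ
    rw [happ] at hγ
    by_cases hmem : γ ∈ s
    · exact hs γ hmem
    · simp [hmem] at hγ
  have hval : ∀ γ ∈ s, ‖f.coeff γ‖ = 1 := fun γ hγ => by rw [happ, if_pos hγ]; simp
  have h1 : l1norm f = s.card := by
    unfold l1norm
    rw [hsupp, Finset.sum_congr rfl hval]
    simp
  have h2 : l2norm f = Real.sqrt s.card := by
    unfold l2norm
    rw [hsupp, Finset.sum_congr rfl (fun γ hγ => by rw [hval γ hγ, one_pow])]
    simp
  have hle : (s.card : ℝ) ≤ P.eval r * Real.sqrt s.card := by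
    have := h r hr f hpos hsub
    rw [hKesten f hpos, h1, h2] at this
    exact this
  rcases Nat.eq_zero_or_pos s.card with h0 | h0
  · rw [h0]; simpa using sq_nonneg (P.eval r)
  · have hsq : (0:ℝ) < Real.sqrt s.card := Real.sqrt_pos.2 (by exact_mod_cast h0)
    have h3 : Real.sqrt s.card ≤ P.eval r := by
      have : Real.sqrt s.card * Real.sqrt s.card ≤ P.eval r * Real.sqrt s.card := by
        rwa [Real.mul_self_sqrt (by positivity)]
      exact le_of_mul_le_mul_right this hsq
    calc (s.card : ℝ) = Real.sqrt s.card ^ 2 := by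
          rw [Real.sq_sqrt (by positivity)]
      _ ≤ (P.eval r) ^ 2 := by
          apply pow_le_pow_left₀ (le_of_lt hsq) h3


/-- If `‖f‖_* = ‖f‖₁` for every nonnegative `f ∈ ℂG` (Kesten's
characterization of amenability) and there is a polynomial `P` such that every
nonnegative `f ∈ ℂG` supported in `B_ℓ(e,r)` satisfies `‖f‖_* ≤ P(r)·‖f‖₂`, then every
ball `B_ℓ(e,r)` is finite with cardinality at most `P(r)²`. -/
theorem amenable_rd_implies_polynomial_growth {G : Type*} [Group G] (ℓ : G → ℝ)
    (hℓ : IsLengthFunction ℓ)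
    (hKesten : ∀ f : MonoidAlgebra ℂ G, (∀ γ : G, 0 ≤ f.coeff γ) → opNorm f = l1norm f)
    (P : Polynomial ℝ)
    (h : ∀ r : ℝ, 0 ≤ r → ∀ f : MonoidAlgebra ℂ G, (∀ γ : G, 0 ≤ f.coeff γ) →
      (∀ γ : G, f.coeff γ ≠ 0 → ℓ γ ≤ r) → opNorm f ≤ P.eval r * l2norm f) :
    ∀ r : ℝ, 0 ≤ r → {γ : G | ℓ γ ≤ r}.Finite ∧
      ({γ : G | ℓ γ ≤ r}.ncard : ℝ) ≤ (P.eval r) ^ 2 := by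
  
  intro r hr
  have hbound : ∀ s : Finset G, (∀ γ ∈ s, ℓ γ ≤ r) → (s.card : ℝ) ≤ (P.eval r) ^ 2 :=
    fun s hs => amenable_rd_aux ℓ hKesten P h r hr s hs
  have hfin : {γ : G | ℓ γ ≤ r}.Finite := by
    by_contra hinf
    have hinf' : {γ : G | ℓ γ ≤ r}.Infinite := hinf
    obtain ⟨t, hts, htf, htc⟩ := hinf'.exists_subset_ncard_eq (⌈(P.eval r) ^ 2⌉₊ + 1)
    have := hbound htf.toFinset (fun γ hγ => hts (htf.mem_toFinset.1 hγ))
    rw [Set.ncard_eq_toFinset_card t htf] at htc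
    rw [htc] at this
    have : ((⌈(P.eval r) ^ 2⌉₊ : ℝ) + 1) ≤ (P.eval r) ^ 2 := by push_cast at this ⊢; linarith
    have h2 : (P.eval r) ^ 2 ≤ (⌈(P.eval r) ^ 2⌉₊ : ℝ) := Nat.le_ceil _
    linarith
  refine ⟨hfin, ?_⟩
  rw [Set.ncard_eq_toFinset_card _ hfin]
  exact hbound hfin.toFinset (fun γ hγ => hfin.mem_toFinset.1 hγ)
end

section
/- Let G be a group with a length function ℓ such that ℓ(γ) = 0 only for γ = e (for example the word length of a finitely generated group), so that d(x,y) = ℓ(x⁻¹y) is a left-invariant metric on G, and suppose there is a real polynomial P with |B_ℓ(e,r)| ≤ P(r) for all r ≥ 0. Define C(x,y) = B̄(x, d(x,y)) ∪ B̄(y, d(x,y)), where B̄(x,r) = {t ∈ G : d(x,t) ≤ r}. Then C is G-equivariant (C(γx,γy) = γ·C(x,y)) and satisfies: (i) for all x, y, z ∈ G, the intersection C(x,y) ∩ C(y,z) ∩ C(z,x) is nonempty; (ii) for all x, y ∈ G and r ≥ 0, the set C(x,y) ∩ B̄(x,r) is finite with cardinality at most 2·P(r); (iii) if d(x,y) ≤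 r then the diameter of C(x,y) is at most 4r. -/
open scoped BigOperators ComplexOrder

/-- The left-invariant (pseudo-)distance associated to a length function. -/
def lengthDist {G : Type*} [Group G] (ℓ : G → ℝ) (x y : G) : ℝ := ℓ (x⁻¹ * y)

/-- The set `C(x,y) = B̄(x, d(x,y)) ∪ B̄(y, d(x,y))` in the polynomial growth case. -/
def growthC {G : Type*} [Group G] (ℓ : G → ℝ) (x y : G) : Set G :=
  {t : G | lengthDist ℓ x t ≤ lengthDist ℓ x y} ∪
    {t : G | lengthDist ℓ y t ≤ lengthDist ℓ x y}

/-- For a group `G` of polynomial growth with a length function `ℓ`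
vanishing only at `e`, the map `C(x,y) = B̄(x,d(x,y)) ∪ B̄(y,d(x,y))` is `G`-equivariant
and satisfies: (i) triple intersections are nonempty, (ii) `C(x,y) ∩ B̄(x,r)` is finite
with at most `2·P(r)` points, and (iii) `d(x,y) ≤ r` implies `diam C(x,y) ≤ 4r`. -/
theorem polynomial_growth_triple_system {G : Type*} [Group G] (ℓ : G → ℝ)
    (hℓ : IsLengthFunction ℓ) (hpos : ∀ γ : G, ℓ γ = 0 → γ = 1)
    (P : Polynomial ℝ)
    (hgrowth : ∀ r : ℝ, 0 ≤ r → {γ : G | ℓ γ ≤ r}.Finite ∧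
      ({γ : G | ℓ γ ≤ r}.ncard : ℝ) ≤ P.eval r) :
    (∀ γ x y : G, growthC ℓ (γ * x) (γ * y) = (fun t => γ * t) '' growthC ℓ x y) ∧
    (∀ x y z : G, (growthC ℓ x y ∩ growthC ℓ y z ∩ growthC ℓ z x).Nonempty) ∧
    (∀ (x y : G) (r : ℝ), 0 ≤ r →
      (growthC ℓ x y ∩ {t : G | lengthDist ℓ x t ≤ r}).Finite ∧
      ((growthC ℓ x y ∩ {t : G | lengthDist ℓ x t ≤ r}).ncard : ℝ) ≤ 2 * P.eval r) ∧
    (∀ (x y : G) (r : ℝ), lengthDist ℓ x y ≤ r →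
      ∀ s ∈ growthC ℓ x y, ∀ t ∈ growthC ℓ x y, lengthDist ℓ s t ≤ 4 * r) := by
  obtain ⟨h1, hnn, hsymm, htri⟩ := hℓ
  -- basic facts about lengthDist
  have dsymm : ∀ x y : G, lengthDist ℓ x y = lengthDist ℓ y x := by
    intro x y
    unfold lengthDist
    rw [← hsymm, mul_inv_rev, inv_inv]
  have dself : ∀ x : G, lengthDist ℓ x x = 0 := by
    intro x; unfold lengthDist; rw [inv_mul_cancel]; exact h1
  have dtri : ∀ x y z : G, lengthDist ℓ x z ≤ lengthDist ℓ x y + lengthDist ℓ y z := by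
    intro x y z
    unfold lengthDist
    have := htri (x⁻¹ * y) (y⁻¹ * z)
    simpa [mul_assoc] using this
  have dnn : ∀ x y : G, 0 ≤ lengthDist ℓ x y := fun x y => hnn _
  have dinv : ∀ γ x t : G, lengthDist ℓ (γ * x) (γ * t) = lengthDist ℓ x t := by
    intro γ x t; unfold lengthDist
    congr 1; group
  refine ⟨?_, ?_, ?_, ?_⟩
  · -- equivariance
    intro γ x y
    ext t
    constructor
    · intro ht
      refine ⟨γ⁻¹ * t, ?_, by group⟩
      rcases ht with ht | ht
      · left
        have : lengthDist ℓ x (γ⁻¹ * t) ≤ lengthDist ℓ x y := by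
          rw [← dinv γ x (γ⁻¹ * t), ← dinv γ x y]
          simpa [mul_assoc] using ht
        exact this
      · right
        have : lengthDist ℓ y (γ⁻¹ * t) ≤ lengthDist ℓ x y := by
          rw [← dinv γ y (γ⁻¹ * t), ← dinv γ x y]
          simpa [mul_assoc] using ht
        exact this
    · rintro ⟨u, hu, rfl⟩
      rcases hu with hu | hu
      · left; simpa [dinv] using hu
      · right; simpa [dinv] using hu
  · -- triple intersection
    intro x y z
    set a := lengthDist ℓ y z
    set b := lengthDist ℓ z x
    set c := lengthDist ℓ x y
    rcases le_total a b with hab | hab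
    · rcases le_total b c with hbc | hbc
      · -- c max: z works
        refine ⟨z, ⟨?_, ?_⟩, ?_⟩
        · right; show lengthDist ℓ y z ≤ c; exact le_trans hab hbc
        · left; simpa using le_of_eq (dself y) |>.trans (dnn y z)
        · left; simpa [dself] using dnn z x
      · -- b max: y works
        refine ⟨y, ⟨?_, ?_⟩, ?_⟩
        · left; exact le_refl c
        · left; simpa [dself] using dnn y z
        · left; show lengthDist ℓ z y ≤ b; rw [dsymm z y]; exact hab
    · rcases le_total a c with hac | hac
      · -- c max: z works
        refine ⟨z, ⟨?_, ?_⟩, ?_⟩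
        · right; exact hac
        · left; simpa [dself] using dnn y z |>.trans (le_refl _)
        · left; simpa [dself] using dnn z x
      · -- a max: x works
        refine ⟨x, ⟨?_, ?_⟩, ?_⟩
        · left; simpa [dself] using dnn x y
        · left; show lengthDist ℓ y x ≤ a; rw [dsymm y x]; exact hac
        · right; simpa [dself] using dnn z x
  · -- finiteness and cardinality bound
    intro x y r hr
    obtain ⟨hfin, hcard⟩ := hgrowth r hr
    have hPnn : 0 ≤ P.eval r := le_trans (by positivity) hcard
    have hsub : growthC ℓ x y ∩ {t : G | lengthDist ℓ x t ≤ r} ⊆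
        (fun γ => x * γ) '' {γ : G | ℓ γ ≤ r} := by
      rintro t ⟨-, ht⟩
      exact ⟨x⁻¹ * t, ht, by group⟩
    have hfin2 : ((fun γ => x * γ) '' {γ : G | ℓ γ ≤ r}).Finite := hfin.image _
    refine ⟨hfin2.subset hsub, ?_⟩
    have h1' : (growthC ℓ x y ∩ {t : G | lengthDist ℓ x t ≤ r}).ncard ≤
        ((fun γ => x * γ) '' {γ : G | ℓ γ ≤ r}).ncard :=
      Set.ncard_le_ncard hsub hfin2
    have h2' : ((fun γ => x * γ) '' {γ : G | ℓ γ ≤ r}).ncard = {γ : G | ℓ γ ≤ r}.ncard :=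
      Set.ncard_image_of_injective _ (mul_right_injective x)
    calc ((growthC ℓ x y ∩ {t : G | lengthDist ℓ x t ≤ r}).ncard : ℝ)
        ≤ ({γ : G | ℓ γ ≤ r}.ncard : ℝ) := by exact_mod_cast h2' ▸ h1'
      _ ≤ P.eval r := hcard
      _ ≤ 2 * P.eval r := by linarith
  · -- diameter bound
    intro x y r hxy s hs t ht
    have hr : 0 ≤ r := le_trans (dnn x y) hxy
    have key : ∀ u ∈ growthC ℓ x y, lengthDist ℓ x u ≤ 2 * r := by
      intro u hu
      rcases hu with hu | hu
      · exact le_trans hu (by linarith)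
      · calc lengthDist ℓ x u ≤ lengthDist ℓ x y + lengthDist ℓ y u := dtri x y u
          _ ≤ r + lengthDist ℓ x y := by linarith [le_trans hu hxy]
          _ ≤ 2 * r := by linarith
    calc lengthDist ℓ s t ≤ lengthDist ℓ s x + lengthDist ℓ x t := dtri s x t
      _ = lengthDist ℓ x s + lengthDist ℓ x t := by rw [dsymm s x]
      _ ≤ 2 * r + 2 * r := add_le_add (key s hs) (key t ht)
      _ = 4 * r := by ring
end

section
/- Let G be a group with a length function ℓ. Suppose there are constants C > 0 and p > 1, and for every n ∈ ℕ a finite subgroup L_n of G with L_n ⊆ B_ℓ(e, Cn) and |L_n| ≥ p^{n+1}. Then G does not have property RD with respect to ℓ; equivalently, there is no real polynomial P such that ‖f‖_* ≤ P(r)·‖f‖₂ for every r ≥ 0 and every nonnegative f ∈ ℂG supported in B_ℓ(e,r). -/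
open scoped BigOperators ComplexOrder

namespace NoRDAux

variable {G : Type*} [Group G]

lemma l2norm_nonneg (f : MonoidAlgebra ℂ G) : 0 ≤ l2norm f := Real.sqrt_nonneg _

lemma l2norm_eq_sum (f : MonoidAlgebra ℂ G) {S : Finset G} (h : f.coeff.support ⊆ S) :
    l2norm f = Real.sqrt (∑ γ ∈ S, ‖f.coeff γ‖ ^ 2) := by
  unfold l2norm
  rw [Finset.sum_subset h]
  intro x _ hx
  simp [Finsupp.notMem_support_iff.mp hx]

lemma l2norm_zero : l2norm (0 : MonoidAlgebra ℂ G) = 0 := by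
  simp [l2norm]

noncomputable def toEuc (S : Finset G) (f : MonoidAlgebra ℂ G) : EuclideanSpace ℂ S :=
  (WithLp.equiv 2 (S → ℂ)).symm (fun i => f.coeff i)

lemma norm_toEuc (S : Finset G) (f : MonoidAlgebra ℂ G) (h : f.coeff.support ⊆ S) :
    ‖toEuc S f‖ = l2norm f := by
  rw [l2norm_eq_sum f h, EuclideanSpace.norm_eq]
  rw [← Finset.sum_coe_sort S (fun γ => ‖f.coeff γ‖ ^ 2)]
  rfl

lemma toEuc_add (S : Finset G) (f g : MonoidAlgebra ℂ G) :
    toEuc S (f + g) = toEuc S f + toEuc S g := by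
  ext i
  exact Finsupp.add_apply f.coeff g.coeff i

lemma l2norm_add_le (f g : MonoidAlgebra ℂ G) :
    l2norm (f + g) ≤ l2norm f + l2norm g := by
  classical
  set S := f.coeff.support ∪ g.coeff.support ∪ (f + g).coeff.support with hS
  have hf : f.coeff.support ⊆ S := Finset.subset_union_left.trans Finset.subset_union_left
  have hg : g.coeff.support ⊆ S := Finset.subset_union_right.trans Finset.subset_union_left
  have hfg : (f + g).coeff.support ⊆ S := Finset.subset_union_right
  rw [← norm_toEuc S f hf, ← norm_toEuc S g hg, ← norm_toEuc S (f + g) hfg, toEuc_add]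
  exact norm_add_le _ _

lemma l2norm_sum_le {ι : Type*} (t : Finset ι) (h : ι → MonoidAlgebra ℂ G) :
    l2norm (∑ i ∈ t, h i) ≤ ∑ i ∈ t, l2norm (h i) := by
  classical
  induction t using Finset.induction with
  | empty => simp [l2norm_zero]
  | insert _ _ hx ih =>
      rw [Finset.sum_insert hx, Finset.sum_insert hx]
      exact (l2norm_add_le _ _).trans (by linarith)

lemma l2norm_smul (c : ℂ) (f : MonoidAlgebra ℂ G) :
    l2norm (c • f) = ‖c‖ * l2norm f := by
  rw [l2norm_eq_sum (c • f) Finsupp.support_smul, l2norm]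
  rw [← Real.sqrt_sq (norm_nonneg c), ← Real.sqrt_mul (sq_nonneg _)]
  congr 1
  rw [Finset.mul_sum]
  refine Finset.sum_congr rfl fun x _ => ?_
  rw [MonoidAlgebra.coeff_smul_apply, smul_eq_mul, norm_mul, mul_pow]

lemma l2norm_single_one_mul (μ : G) (g : MonoidAlgebra ℂ G) :
    l2norm (MonoidAlgebra.single μ (1 : ℂ) * g) = l2norm g := by
  classical
  have happ : ∀ γ, (MonoidAlgebra.single μ (1 : ℂ) * g).coeff γ = g.coeff (μ⁻¹ * γ) := by
    intro γ; rw [MonoidAlgebra.coeff_single_mul_apply, one_mul]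
  have hsub : (MonoidAlgebra.single μ (1 : ℂ) * g).coeff.support ⊆
      g.coeff.support.map ⟨(μ * ·), mul_right_injective μ⟩ := by
    intro γ hγ
    rw [Finsupp.mem_support_iff, happ] at hγ
    simp only [Finset.mem_map, Function.Embedding.coeFn_mk]
    exact ⟨μ⁻¹ * γ, Finsupp.mem_support_iff.mpr hγ, by group⟩
  rw [l2norm_eq_sum _ hsub, Finset.sum_map, l2norm]
  congr 1
  refine Finset.sum_congr rfl fun x _ => ?_
  simp [happ]

end NoRDAux

namespace NoRDAux

variable {G : Type*} [Group G]

noncomputable def ind (S : Finset G) : MonoidAlgebra ℂ G :=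
  ∑ μ ∈ S, MonoidAlgebra.single μ 1

lemma ind_apply [DecidableEq G] (S : Finset G) (γ : G) : (ind S).coeff γ = if γ ∈ S then 1 else 0 := by
  classical
  rw [ind, MonoidAlgebra.coeff_sum, Finsupp.finset_sum_apply]
  simp [MonoidAlgebra.coeff_single, Finsupp.single_apply]

lemma support_ind_subset (S : Finset G) : (ind S).coeff.support ⊆ S := by
  classical
  intro γ hγ
  rw [Finsupp.mem_support_iff, ind_apply] at hγ
  by_contra h
  simp [h] at hγ

lemma l2norm_ind (S : Finset G) : l2norm (ind S) = Real.sqrt S.card := by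
  classical
  rw [l2norm_eq_sum _ (support_ind_subset S)]
  congr 1
  rw [Finset.sum_congr rfl (fun x hx => by rw [ind_apply, if_pos hx] : ∀ x ∈ S, ‖(ind S).coeff x‖ ^ 2 = ‖(1:ℂ)‖ ^ 2)]
  simp

lemma map_eq_self (S : Finset G) (μ : G) (hμ : μ ∈ S)
    (hmul : ∀ a ∈ S, ∀ b ∈ S, a * b ∈ S) (hinv : ∀ a ∈ S, a⁻¹ ∈ S) :
    S.map ⟨(μ * ·), mul_right_injective μ⟩ = S := by
  ext γ
  simp only [Finset.mem_map, Function.Embedding.coeFn_mk]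
  constructor
  · rintro ⟨ν, hν, rfl⟩; exact hmul μ hμ ν hν
  · intro hγ; exact ⟨μ⁻¹ * γ, hmul μ⁻¹ (hinv μ hμ) γ hγ, by group⟩

lemma ind_mul_ind (S : Finset G) (hmul : ∀ a ∈ S, ∀ b ∈ S, a * b ∈ S)
    (hinv : ∀ a ∈ S, a⁻¹ ∈ S) :
    ind S * ind S = (S.card : ℂ) • ind S := by
  classical
  rw [ind, Finset.sum_mul_sum]
  have h : ∀ μ ∈ S, ∑ ν ∈ S, MonoidAlgebra.single μ (1:ℂ) * MonoidAlgebra.single ν 1 = ind S := by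
    intro μ hμ
    rw [ind]
    conv_rhs => rw [← map_eq_self S μ hμ hmul hinv]
    rw [Finset.sum_map]
    refine Finset.sum_congr rfl fun ν _ => ?_
    rw [MonoidAlgebra.single_mul_single, one_mul]
    rfl
  rw [Finset.sum_congr rfl h, Finset.sum_const, Nat.cast_smul_eq_nsmul, ind]

lemma l2norm_ind_mul_le (S : Finset G) (g : MonoidAlgebra ℂ G) :
    l2norm (ind S * g) ≤ S.card * l2norm g := by
  rw [ind, Finset.sum_mul]
  calc l2norm (∑ μ ∈ S, MonoidAlgebra.single μ (1:ℂ) * g)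
      ≤ ∑ μ ∈ S, l2norm (MonoidAlgebra.single μ (1:ℂ) * g) := l2norm_sum_le _ _
    _ = ∑ μ ∈ S, l2norm g := Finset.sum_congr rfl fun μ _ => l2norm_single_one_mul μ g
    _ = S.card * l2norm g := by rw [Finset.sum_const, nsmul_eq_mul]

lemma card_le_opNorm_ind (S : Finset G) (hne : S.Nonempty)
    (hmul : ∀ a ∈ S, ∀ b ∈ S, a * b ∈ S) (hinv : ∀ a ∈ S, a⁻¹ ∈ S) :
    (S.card : ℝ) ≤ opNorm (ind S) := by
  have hcpos : (0:ℝ) < S.card := by exact_mod_cast hne.card_pos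
  have hspos : 0 < Real.sqrt S.card := Real.sqrt_pos.mpr hcpos
  have hss : Real.sqrt S.card * Real.sqrt S.card = (S.card : ℝ) :=
    Real.mul_self_sqrt hcpos.le
  apply le_csSup
  · refine ⟨S.card, ?_⟩
    rintro c ⟨g, hg1, rfl⟩
    simpa [hg1] using l2norm_ind_mul_le S g
  · refine ⟨((Real.sqrt S.card : ℂ))⁻¹ • ind S, ?_, ?_⟩
    · rw [l2norm_smul, l2norm_ind, norm_inv, Complex.norm_real, Real.norm_eq_abs,
        abs_of_nonneg (Real.sqrt_nonneg _)]
      exact inv_mul_cancel₀ hspos.ne'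
    · rw [mul_smul_comm, ind_mul_ind S hmul hinv, smul_smul, l2norm_smul, l2norm_ind]
      rw [norm_mul, norm_inv, Complex.norm_real, Real.norm_eq_abs, Complex.norm_natCast,
        abs_of_nonneg (Real.sqrt_nonneg _)]
      field_simp

lemma sobolev_ind_le (ℓ : G → ℝ) (hℓnn : ∀ γ, 0 ≤ ℓ γ) (s R : ℝ) (hs : 0 < s) (hR : 0 ≤ R)
    (S : Finset G) (hball : ∀ γ ∈ S, ℓ γ ≤ R) :
    sobolevNorm ℓ s (ind S) ≤ (1 + R) ^ s * l2norm (ind S) := by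
  rw [sobolevNorm, l2norm]
  rw [← Real.sqrt_sq (Real.rpow_nonneg (by linarith) s), ← Real.sqrt_mul (sq_nonneg _)]
  apply Real.sqrt_le_sqrt
  have hsq : ((1 + R) ^ s) ^ 2 = (1 + R) ^ (2 * s) := by
    rw [← Real.rpow_natCast ((1 + R) ^ s) 2, ← Real.rpow_mul (by linarith)]
    norm_num [mul_comm]
  rw [hsq, Finset.mul_sum]
  apply Finset.sum_le_sum
  intro γ hγ
  have hγS : γ ∈ S := support_ind_subset S hγ
  rw [mul_comm ((1 + R) ^ (2 * s))]
  refine mul_le_mul_of_nonneg_left ?_ (by positivity)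
  exact Real.rpow_le_rpow (by linarith [hℓnn γ]) (by linarith [hball γ hγS]) (by positivity)

lemma poly_le (P : Polynomial ℝ) :
    ∃ K : ℝ, 0 ≤ K ∧ ∀ x : ℝ, 0 ≤ x → P.eval x ≤ K * (1 + x) ^ P.natDegree := by
  refine ⟨∑ i ∈ Finset.range (P.natDegree + 1), |P.coeff i|,
    Finset.sum_nonneg fun i _ => abs_nonneg _, fun x hx => ?_⟩
  rw [Polynomial.eval_eq_sum_range, Finset.sum_mul]
  apply Finset.sum_le_sum
  intro i hi
  calc P.coeff i * x ^ i ≤ |P.coeff i| * x ^ i :=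
        mul_le_mul_of_nonneg_right (le_abs_self _) (by positivity)
    _ ≤ |P.coeff i| * (1 + x) ^ P.natDegree := by
        refine mul_le_mul_of_nonneg_left ?_ (abs_nonneg _)
        calc x ^ i ≤ (1 + x) ^ i := pow_le_pow_left₀ hx (by linarith) i
          _ ≤ (1 + x) ^ P.natDegree :=
            pow_le_pow_right₀ (by linarith) (Nat.lt_succ_iff.mp (Finset.mem_range.mp hi))

lemma no_exp_le (q K : ℝ) (hq : 1 < q) (k : ℕ)
    (h : ∀ n : ℕ, q ^ (n + 1) ≤ K * (1 + (n : ℝ)) ^ k) : False := by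
  have hK : 0 < K := by have := h 0; simp at this; linarith
  have h0 : Filter.Tendsto (fun n : ℕ => K * 2 ^ k * ((n : ℝ) ^ k / q ^ n))
      Filter.atTop (nhds 0) := by
    simpa using (tendsto_pow_const_div_const_pow_of_one_lt k hq).const_mul (K * 2 ^ k)
  have h1 : ∀ᶠ n : ℕ in Filter.atTop, K * 2 ^ k * ((n : ℝ) ^ k / q ^ n) < q :=
    h0.eventually (gt_mem_nhds (by linarith))
  obtain ⟨n, hn1, hn2⟩ := (h1.and (Filter.eventually_ge_atTop 1)).exists
  have hn1' : (1 : ℝ) ≤ n := by exact_mod_cast hn2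
  have hqn : (0 : ℝ) < q ^ n := by positivity
  have hle : (1 + (n : ℝ)) ^ k ≤ 2 ^ k * (n : ℝ) ^ k := by
    rw [← mul_pow]
    exact pow_le_pow_left₀ (by linarith) (by linarith) k
  have e1 : K * 2 ^ k * ((n : ℝ) ^ k / q ^ n) * q ^ n = K * (2 ^ k * (n : ℝ) ^ k) := by
    field_simp
  have h2 := h n
  rw [pow_succ] at h2
  nlinarith [mul_lt_mul_of_pos_right hn1 hqn,
    mul_le_mul_of_nonneg_left hle hK.le]

end NoRDAux

/-- If `G` contains finite subgroups `L_n ⊆ B_ℓ(e, Cn)` with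
`|L_n| ≥ p^(n+1)` for some `C > 0` and `p > 1`, then `G` does not have property RD with
respect to `ℓ`; equivalently there is no polynomial `P` with `‖f‖_* ≤ P(r)·‖f‖₂` for all
nonnegative `f ∈ ℂG` supported in `B_ℓ(e,r)`. -/
theorem exponentially_large_finite_subgroups_no_rd {G : Type*} [Group G] (ℓ : G → ℝ)
    (hℓ : IsLengthFunction ℓ) (C p : ℝ) (hC : 0 < C) (hp : 1 < p)
    (L : ℕ → Subgroup G) (hfin : ∀ n : ℕ, ((L n : Set G)).Finite)
    (hball : ∀ n : ℕ, (L n : Set G) ⊆ {γ : G | ℓ γ ≤ C * n})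
    (hcard : ∀ n : ℕ, p ^ (n + 1) ≤ ((L n : Set G).ncard : ℝ)) :
    ¬ PropertyRD ℓ ∧
    ¬ ∃ P : Polynomial ℝ, ∀ r : ℝ, 0 ≤ r → ∀ f : MonoidAlgebra ℂ G,
      (∀ γ : G, 0 ≤ f.coeff γ) → (∀ γ : G, f.coeff γ ≠ 0 → ℓ γ ≤ r) →
      opNorm f ≤ P.eval r * l2norm f := by
  classical
  obtain ⟨hℓ1, hℓnn, hℓinv, hℓmul⟩ := hℓ
  set S : ℕ → Finset G := fun n => (hfin n).toFinset with hSdef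
  have hmem : ∀ n (γ : G), γ ∈ S n ↔ γ ∈ L n := fun n γ => (hfin n).mem_toFinset
  have hne : ∀ n, (S n).Nonempty := fun n => ⟨1, (hmem n 1).mpr (one_mem _)⟩
  have hmulS : ∀ n, ∀ a ∈ S n, ∀ b ∈ S n, a * b ∈ S n := fun n a ha b hb =>
    (hmem n _).mpr (mul_mem ((hmem n a).mp ha) ((hmem n b).mp hb))
  have hinvS : ∀ n, ∀ a ∈ S n, a⁻¹ ∈ S n := fun n a ha =>
    (hmem n _).mpr (inv_mem ((hmem n a).mp ha))
  have hballS : ∀ n, ∀ γ ∈ S n, ℓ γ ≤ C * n := fun n γ hγ => hball n ((hmem n γ).mp hγ)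
  have hcardS : ∀ n, p ^ (n + 1) ≤ ((S n).card : ℝ) := by
    intro n
    have := hcard n
    rwa [Set.ncard_eq_toFinset_card _ (hfin n)] at this
  have hq : 1 < Real.sqrt p := by
    have := Real.sqrt_lt_sqrt (by norm_num : (0:ℝ) ≤ 1) hp
    simpa using this
  have hplow : ∀ n : ℕ, Real.sqrt p ^ (n + 1) ≤ Real.sqrt ((S n).card) := by
    intro n
    apply Real.le_sqrt_of_sq_le
    calc (Real.sqrt p ^ (n + 1)) ^ 2 = (Real.sqrt p ^ 2) ^ (n + 1) := by ring
      _ = p ^ (n + 1) := by rw [Real.sq_sqrt (by linarith)]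
      _ ≤ _ := hcardS n
  have hspos : ∀ n, 0 < Real.sqrt ((S n).card) := fun n =>
    Real.sqrt_pos.mpr (by exact_mod_cast (hne n).card_pos)
  have hdiv : ∀ (n : ℕ) (D : ℝ), ((S n).card : ℝ) ≤ D * Real.sqrt ((S n).card) →
      Real.sqrt ((S n).card) ≤ D := by
    intro n D h
    have hm : Real.sqrt ((S n).card) * Real.sqrt ((S n).card) = ((S n).card : ℝ) :=
      Real.mul_self_sqrt (by positivity)
    nlinarith [hspos n]
  have hCn : ∀ n : ℕ, (0:ℝ) ≤ C * n := fun n => by positivity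
  have h1Cn : ∀ n : ℕ, (1 : ℝ) + C * n ≤ (1 + C) * (1 + n) := by
    intro n
    have h0 : (0:ℝ) ≤ n := Nat.cast_nonneg n
    nlinarith
  constructor
  · rintro ⟨C', s, hC', hs, H⟩
    refine NoRDAux.no_exp_le (Real.sqrt p) (C' * (1 + C) ^ s) hq ⌈s⌉₊ (fun n => ?_)
    have h1 : ((S n).card : ℝ) ≤ opNorm (NoRDAux.ind (S n)) :=
      NoRDAux.card_le_opNorm_ind (S n) (hne n) (hmulS n) (hinvS n)
    have h2 := H (NoRDAux.ind (S n))
    have h3 : sobolevNorm ℓ s (NoRDAux.ind (S n)) ≤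
        (1 + C * n) ^ s * l2norm (NoRDAux.ind (S n)) :=
      NoRDAux.sobolev_ind_le ℓ hℓnn s (C * n) hs (hCn n) (S n) (hballS n)
    rw [NoRDAux.l2norm_ind] at h3
    have h4 : Real.sqrt ((S n).card) ≤ C' * (1 + C * n) ^ s := by
      apply hdiv n
      calc ((S n).card : ℝ) ≤ opNorm (NoRDAux.ind (S n)) := h1
        _ ≤ C' * sobolevNorm ℓ s (NoRDAux.ind (S n)) := h2
        _ ≤ C' * ((1 + C * n) ^ s * Real.sqrt ((S n).card)) :=
            mul_le_mul_of_nonneg_left h3 hC'.le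
        _ = C' * (1 + C * n) ^ s * Real.sqrt ((S n).card) := by ring
    refine (hplow n).trans (h4.trans ?_)
    have h5 : ((1:ℝ) + C * n) ^ s ≤ (1 + C) ^ s * (1 + (n:ℝ)) ^ (⌈s⌉₊ : ℕ) := by
      calc ((1:ℝ) + C * n) ^ s ≤ ((1 + C) * (1 + (n:ℝ))) ^ s :=
            Real.rpow_le_rpow (by positivity) (h1Cn n) hs.le
        _ = (1 + C) ^ s * (1 + (n:ℝ)) ^ s := Real.mul_rpow (by positivity) (by positivity)
        _ ≤ (1 + C) ^ s * (1 + (n:ℝ)) ^ ((⌈s⌉₊ : ℕ) : ℝ) := by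
            refine mul_le_mul_of_nonneg_left ?_ (Real.rpow_nonneg (by positivity) _)
            refine Real.rpow_le_rpow_of_exponent_le ?_ (Nat.le_ceil s)
            have h0 : (0:ℝ) ≤ n := Nat.cast_nonneg n
            linarith
        _ = (1 + C) ^ s * (1 + (n:ℝ)) ^ (⌈s⌉₊ : ℕ) := by rw [Real.rpow_natCast]
    calc C' * (1 + C * n) ^ s ≤ C' * ((1 + C) ^ s * (1 + (n:ℝ)) ^ ⌈s⌉₊) :=
          mul_le_mul_of_nonneg_left h5 hC'.le
      _ = C' * (1 + C) ^ s * (1 + (n:ℝ)) ^ ⌈s⌉₊ := by ring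
  · rintro ⟨P, hP⟩
    obtain ⟨K, hK0, hK⟩ := NoRDAux.poly_le P
    refine NoRDAux.no_exp_le (Real.sqrt p) (K * (1 + C) ^ P.natDegree) hq P.natDegree
      (fun n => ?_)
    have h1 : ((S n).card : ℝ) ≤ opNorm (NoRDAux.ind (S n)) :=
      NoRDAux.card_le_opNorm_ind (S n) (hne n) (hmulS n) (hinvS n)
    have hnn : ∀ γ : G, 0 ≤ (NoRDAux.ind (S n)).coeff γ := by
      intro γ
      rw [NoRDAux.ind_apply]
      split
      · exact zero_le_one
      · exact le_refl 0
    have hsupp : ∀ γ : G, (NoRDAux.ind (S n)).coeff γ ≠ 0 → ℓ γ ≤ C * n := by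
      intro γ hγ
      rw [NoRDAux.ind_apply] at hγ
      by_cases h : γ ∈ S n
      · exact hballS n γ h
      · simp [h] at hγ
    have h2 := hP (C * n) (hCn n) (NoRDAux.ind (S n)) hnn hsupp
    rw [NoRDAux.l2norm_ind] at h2
    have h4 : Real.sqrt ((S n).card) ≤ P.eval (C * n) := hdiv n _ (h1.trans h2)
    refine (hplow n).trans (h4.trans ?_)
    calc P.eval (C * n) ≤ K * (1 + C * n) ^ P.natDegree := hK _ (hCn n)
      _ ≤ K * ((1 + C) * (1 + (n:ℝ))) ^ P.natDegree :=
          mul_le_mul_of_nonneg_left (pow_le_pow_left₀ (by positivity) (h1Cn n) _) hK0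
      _ = K * (1 + C) ^ P.natDegree * (1 + (n:ℝ)) ^ P.natDegree := by
          rw [mul_pow]; ring
end

section
/- Let G be a group with a length function ℓ, and suppose G contains an element γ of infinite order which generates an exponentially distorted copy of ℤ, i.e. there is a constant C > 0 such that ℓ(γⁿ) ≤ C·log(n+1) for all n ≥ 1. Then G does not have property RD with respect to ℓ. -/
open scoped BigOperators ComplexOrder

set_option linter.unusedSectionVars false
namespace RDaux

variable {G : Type*} [Group G]

noncomputable def S2 (f : MonoidAlgebra ℂ G) : ℝ := ∑ γ ∈ f.coeff.support, ‖f.coeff γ‖ ^ 2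

lemma S2_nonneg (f : MonoidAlgebra ℂ G) : 0 ≤ S2 f :=
  Finset.sum_nonneg fun _ _ => by positivity

lemma l2norm_eq (f : MonoidAlgebra ℂ G) : l2norm f = Real.sqrt (S2 f) := rfl

lemma l2norm_nonneg (f : MonoidAlgebra ℂ G) : 0 ≤ l2norm f := Real.sqrt_nonneg _

lemma l2norm_sq (f : MonoidAlgebra ℂ G) : (l2norm f) ^ 2 = S2 f := by
  rw [l2norm_eq, Real.sq_sqrt (S2_nonneg f)]

lemma S2_eq_sum_subset (f : MonoidAlgebra ℂ G) {T : Finset G} (h : f.coeff.support ⊆ T) :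
    S2 f = ∑ γ ∈ T, ‖f.coeff γ‖ ^ 2 := by
  refine Finset.sum_subset h fun x _ hx => ?_
  rw [Finsupp.notMem_support_iff.mp hx]
  simp

lemma S2_smul (c : ℂ) (f : MonoidAlgebra ℂ G) : S2 (c • f) = ‖c‖ ^ 2 * S2 f := by
  rw [S2_eq_sum_subset (c • f) (Finsupp.support_smul (b := c) (g := f.coeff)), S2, Finset.mul_sum]
  refine Finset.sum_congr rfl fun x _ => ?_
  rw [MonoidAlgebra.coeff_smul_apply, smul_eq_mul, norm_mul, mul_pow]

lemma l2norm_smul (c : ℂ) (f : MonoidAlgebra ℂ G) : l2norm (c • f) = ‖c‖ * l2norm f := by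
  rw [l2norm_eq, l2norm_eq, S2_smul, Real.sqrt_mul (by positivity), Real.sqrt_sq (norm_nonneg c)]

lemma S2_single_mul (a : G) (b : ℂ) (g : MonoidAlgebra ℂ G) :
    S2 (MonoidAlgebra.single a b * g) = ‖b‖ ^ 2 * S2 g := by
  have hsub : (MonoidAlgebra.single a b * g).coeff.support ⊆
      g.coeff.support.map (Equiv.toEmbedding (Equiv.mulLeft a)) := by
    intro x hx
    rw [Finsupp.mem_support_iff, MonoidAlgebra.coeff_single_mul_apply] at hx
    have : g.coeff (a⁻¹ * x) ≠ 0 := fun h => hx (by simp [h])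
    simp only [Finset.mem_map, Equiv.toEmbedding_apply, Equiv.coe_mulLeft]
    exact ⟨a⁻¹ * x, Finsupp.mem_support_iff.mpr this, by group⟩
  rw [S2_eq_sum_subset _ hsub, Finset.sum_map, S2, Finset.mul_sum]
  refine Finset.sum_congr rfl fun x _ => ?_
  simp only [Equiv.toEmbedding_apply, Equiv.coe_mulLeft, MonoidAlgebra.coeff_single_mul_apply]
  rw [show a⁻¹ * (a * x) = x by group, norm_mul, mul_pow]

lemma l2norm_single_mul (a : G) (b : ℂ) (g : MonoidAlgebra ℂ G) :
    l2norm (MonoidAlgebra.single a b * g) = ‖b‖ * l2norm g := by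
  rw [l2norm_eq, l2norm_eq, S2_single_mul, Real.sqrt_mul (by positivity),
    Real.sqrt_sq (norm_nonneg b)]

end RDaux
-- Minkowski inequality and opNorm bounds
namespace RDaux

variable {G : Type*} [Group G]

lemma minkowski_finset (T : Finset G) (u v : G → ℝ) (hu : ∀ x, 0 ≤ u x) (hv : ∀ x, 0 ≤ v x) :
    Real.sqrt (∑ x ∈ T, (u x + v x) ^ 2) ≤
      Real.sqrt (∑ x ∈ T, u x ^ 2) + Real.sqrt (∑ x ∈ T, v x ^ 2) := by
  set X := ∑ x ∈ T, u x ^ 2 with hX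
  set Y := ∑ x ∈ T, v x ^ 2 with hY
  have hXn : 0 ≤ X := Finset.sum_nonneg fun _ _ => sq_nonneg _
  have hYn : 0 ≤ Y := Finset.sum_nonneg fun _ _ => sq_nonneg _
  have hCS : ∑ x ∈ T, u x * v x ≤ Real.sqrt X * Real.sqrt Y :=
    Real.sum_mul_le_sqrt_mul_sqrt T u v
  have key : ∑ x ∈ T, (u x + v x) ^ 2 ≤ (Real.sqrt X + Real.sqrt Y) ^ 2 := by
    have expand : ∑ x ∈ T, (u x + v x) ^ 2 = X + 2 * (∑ x ∈ T, u x * v x) + Y := by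
      rw [hX, hY, Finset.mul_sum, ← Finset.sum_add_distrib, ← Finset.sum_add_distrib]
      exact Finset.sum_congr rfl fun x _ => by ring
    rw [expand, add_sq, Real.sq_sqrt hXn, Real.sq_sqrt hYn]
    nlinarith [hCS]
  calc Real.sqrt (∑ x ∈ T, (u x + v x) ^ 2) ≤ Real.sqrt ((Real.sqrt X + Real.sqrt Y) ^ 2) :=
        Real.sqrt_le_sqrt key
    _ = Real.sqrt X + Real.sqrt Y := Real.sqrt_sq (by positivity)

lemma l2norm_add_le (f g : MonoidAlgebra ℂ G) : l2norm (f + g) ≤ l2norm f + l2norm g := by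
  classical
  set T := f.coeff.support ∪ g.coeff.support with hT
  have hfg : (f + g).coeff.support ⊆ T := Finsupp.support_add
  have hf : f.coeff.support ⊆ T := Finset.subset_union_left
  have hg : g.coeff.support ⊆ T := Finset.subset_union_right
  rw [l2norm_eq, l2norm_eq, l2norm_eq, S2_eq_sum_subset _ hfg, S2_eq_sum_subset _ hf,
    S2_eq_sum_subset _ hg]
  calc Real.sqrt (∑ x ∈ T, ‖(f + g).coeff x‖ ^ 2)
      ≤ Real.sqrt (∑ x ∈ T, (‖f.coeff x‖ + ‖g.coeff x‖) ^ 2) := by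
        refine Real.sqrt_le_sqrt (Finset.sum_le_sum fun x _ => ?_)
        have h1 : ‖(f + g).coeff x‖ ≤ ‖f.coeff x‖ + ‖g.coeff x‖ := by
          rw [MonoidAlgebra.coeff_add, Finsupp.add_apply]; exact norm_add_le _ _
        exact pow_le_pow_left₀ (norm_nonneg _) h1 2
    _ ≤ _ := minkowski_finset T _ _ (fun _ => norm_nonneg _) (fun _ => norm_nonneg _)

lemma l2norm_zero : l2norm (0 : MonoidAlgebra ℂ G) = 0 := by
  rw [l2norm_eq, S2]; simp

lemma l2norm_sum_le {ι : Type*} (T : Finset ι) (F : ι → MonoidAlgebra ℂ G) :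
    l2norm (∑ i ∈ T, F i) ≤ ∑ i ∈ T, l2norm (F i) := by
  classical
  induction T using Finset.induction_on with
  | empty => simp [l2norm_zero]
  | insert _ _ h ih =>
    rw [Finset.sum_insert h, Finset.sum_insert h]
    exact le_trans (l2norm_add_le _ _) (by linarith)

lemma l2norm_mul_le (f g : MonoidAlgebra ℂ G) :
    l2norm (f * g) ≤ (∑ x ∈ f.coeff.support, ‖f.coeff x‖) * l2norm g := by
  classical
  have hf : f = ∑ x ∈ f.coeff.support, MonoidAlgebra.single x (f.coeff x) := by
    conv_lhs => rw [← MonoidAlgebra.sum_coeff_single f]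
    rfl
  calc l2norm (f * g) = l2norm (∑ x ∈ f.coeff.support, MonoidAlgebra.single x (f.coeff x) * g) := by
        rw [← Finset.sum_mul, ← hf]
    _ ≤ ∑ x ∈ f.coeff.support, l2norm (MonoidAlgebra.single x (f.coeff x) * g) := l2norm_sum_le _ _
    _ = ∑ x ∈ f.coeff.support, ‖f.coeff x‖ * l2norm g := by
        exact Finset.sum_congr rfl fun x _ => l2norm_single_mul _ _ _
    _ = _ := by rw [← Finset.sum_mul]

lemma opNorm_bddAbove (f : MonoidAlgebra ℂ G) :
    BddAbove {c : ℝ | ∃ g : MonoidAlgebra ℂ G, l2norm g = 1 ∧ c = l2norm (f * g)} := by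
  refine ⟨∑ x ∈ f.coeff.support, ‖f.coeff x‖, fun c hc => ?_⟩
  obtain ⟨g, hg1, rfl⟩ := hc
  calc l2norm (f * g) ≤ (∑ x ∈ f.coeff.support, ‖f.coeff x‖) * l2norm g := l2norm_mul_le f g
    _ = ∑ x ∈ f.coeff.support, ‖f.coeff x‖ := by rw [hg1, mul_one]

lemma le_opNorm (f g : MonoidAlgebra ℂ G) (hg : l2norm g = 1) :
    l2norm (f * g) ≤ opNorm f :=
  le_csSup (opNorm_bddAbove f) ⟨g, hg, rfl⟩

end RDaux
namespace RDaux

variable {G : Type*} [Group G] [DecidableEq G]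

lemma sum_single_apply_of_injOn {ι : Type*} [DecidableEq ι] (T : Finset ι) (x : ι → G)
    (v : ι → ℂ) (hinj : Set.InjOn x T) {i : ι} (hi : i ∈ T) :
    (∑ j ∈ T, MonoidAlgebra.single (x j) (v j)).coeff (x i) = v i := by
  classical
  rw [MonoidAlgebra.coeff_sum, Finset.sum_apply']
  rw [Finset.sum_eq_single i]
  · simp [MonoidAlgebra.coeff_single, Finsupp.single_apply]
  · intro j hj hji
    rw [MonoidAlgebra.coeff_single, Finsupp.single_apply, if_neg]
    exact fun h => hji (hinj hj hi h)
  · intro h; exact absurd hi h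

lemma support_sum_single_subset {ι : Type*} (T : Finset ι) (x : ι → G) (v : ι → ℂ) :
    (∑ j ∈ T, MonoidAlgebra.single (x j) (v j)).coeff.support ⊆ T.image x := by
  classical
  rw [MonoidAlgebra.coeff_sum]
  refine subset_trans Finsupp.support_finset_sum ?_
  intro y hy
  rw [Finset.mem_biUnion] at hy
  obtain ⟨j, hj, hyj⟩ := hy
  have := Finsupp.support_single_subset hyj
  rw [Finset.mem_singleton] at this
  exact Finset.mem_image.mpr ⟨j, hj, this.symm⟩

lemma apply_eq_zero_of_not_mem_image {ι : Type*} (T : Finset ι) (x : ι → G) (v : ι → ℂ)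
    {y : G} (hy : y ∉ T.image x) :
    (∑ j ∈ T, MonoidAlgebra.single (x j) (v j)).coeff y = 0 := by
  have := support_sum_single_subset T x v
  by_contra h
  exact hy (this (Finsupp.mem_support_iff.mpr h))

/-- Sum of `‖·‖² * w ·` over the support of a sum of singles at injectively-placed points. -/
lemma weighted_sum_single {ι : Type*} [DecidableEq ι] (T : Finset ι) (x : ι → G) (v : ι → ℂ)
    (hinj : Set.InjOn x T) (w : G → ℝ) (hw : ∀ y, 0 ≤ w y) :
    ∑ y ∈ (∑ j ∈ T, MonoidAlgebra.single (x j) (v j)).coeff.support,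
      ‖(∑ j ∈ T, MonoidAlgebra.single (x j) (v j)).coeff y‖ ^ 2 * w y
    = ∑ j ∈ T, ‖v j‖ ^ 2 * w (x j) := by
  classical
  set f := ∑ j ∈ T, MonoidAlgebra.single (x j) (v j) with hf
  have h1 : ∑ y ∈ f.coeff.support, ‖f.coeff y‖ ^ 2 * w y = ∑ y ∈ T.image x, ‖f.coeff y‖ ^ 2 * w y := by
    refine Finset.sum_subset (support_sum_single_subset T x v) fun y _ hy => ?_
    rw [Finsupp.notMem_support_iff.mp hy]; simp
  rw [h1, Finset.sum_image (fun a ha b hb h => hinj ha hb h)]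
  refine Finset.sum_congr rfl fun j hj => ?_
  rw [hf, sum_single_apply_of_injOn T x v hinj hj]

lemma S2_sum_single {ι : Type*} [DecidableEq ι] (T : Finset ι) (x : ι → G) (v : ι → ℂ)
    (hinj : Set.InjOn x T) :
    S2 (∑ j ∈ T, MonoidAlgebra.single (x j) (v j)) = ∑ j ∈ T, ‖v j‖ ^ 2 := by
  have := weighted_sum_single T x v hinj (fun _ => 1) (fun _ => zero_le_one)
  simpa [S2] using this

end RDaux
set_option maxHeartbeats 1000000 in
/-- If `G` contains an element `γ` of infinite order generating an
exponentially distorted copy of `ℤ`, i.e. `ℓ(γⁿ) ≤ C·log(n+1)` for all `n ≥ 1`, then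
`G` does not have property RD with respect to `ℓ`. -/
theorem exponentially_distorted_element_no_rd {G : Type*} [Group G] (ℓ : G → ℝ)
    (hℓ : IsLengthFunction ℓ) (γ : G) (hinf : ∀ n : ℕ, 1 ≤ n → γ ^ n ≠ 1)
    (C : ℝ) (hC : 0 < C)
    (hdist : ∀ n : ℕ, 1 ≤ n → ℓ (γ ^ n) ≤ C * Real.log (n + 1)) :
    ¬ PropertyRD ℓ := by
  classical
  rintro ⟨C', s, hC', hs, hRD⟩
  obtain ⟨hℓ1, hℓnn, hℓinv, hℓsub⟩ := hℓ
  -- injectivity of powers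
  have key : ∀ a b : ℕ, a ≤ b → γ ^ a = γ ^ b → a = b := by
    intro a b hab h
    by_contra hne
    refine hinf (b - a) (by omega) ?_
    have hb : γ ^ b = γ ^ a * γ ^ (b - a) := by
      rw [← pow_add]; congr 1; omega
    rw [hb] at h
    exact (left_eq_mul.mp h)
  have hinjpow : Function.Injective fun n : ℕ => γ ^ n := by
    intro a b h
    rcases le_total a b with hab | hba
    · exact key a b hab h
    · exact (key b a hba h.symm).symm
  -- constants
  obtain ⟨ε, hεpos, hεs⟩ : ∃ ε : ℝ, 0 < ε ∧ ε * s = 1 / 4 :=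
    ⟨1 / (4 * s), by positivity, by field_simp⟩
  obtain ⟨A, hApos, hA⟩ : ∃ A : ℝ, 0 < A ∧ A = 1 + C * (2 : ℝ) ^ ε / ε :=
    ⟨_, by positivity, rfl⟩
  obtain ⟨B, hBpos, hB⟩ : ∃ B : ℝ, 0 < B ∧ B = Real.sqrt 2 * C' * A ^ s :=
    ⟨_, by positivity, rfl⟩
  obtain ⟨N, hN1, hNB⟩ : ∃ N : ℕ, 1 ≤ N ∧ B ^ 4 < (N : ℝ) :=
    ⟨⌊B ^ 4⌋₊ + 1, by omega, by push_cast; exact Nat.lt_floor_add_one _⟩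
  have hNR1 : (1 : ℝ) ≤ (N : ℝ) := by exact_mod_cast hN1
  have hNpos : (0 : ℝ) < N := by linarith
  -- the test function
  set f : MonoidAlgebra ℂ G :=
    ∑ k ∈ Finset.Icc 1 N, MonoidAlgebra.single (γ ^ k) (1 : ℂ) with hf
  have hinjOn : ∀ T : Finset ℕ, Set.InjOn (fun n : ℕ => γ ^ n) T :=
    fun T => hinjpow.injOn
  -- S2 f = N
  have hS2f : RDaux.S2 f = N := by
    rw [hf, RDaux.S2_sum_single _ _ _ (hinjOn _)]
    simp [Nat.card_Icc]
  have hl2f : l2norm f = Real.sqrt N := by rw [RDaux.l2norm_eq, hS2f]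
  have hsqrtNpos : 0 < Real.sqrt N := Real.sqrt_pos.mpr hNpos
  have hss : Real.sqrt N * Real.sqrt N = (N : ℝ) := Real.mul_self_sqrt (le_of_lt hNpos)
  -- normalized g
  set g : MonoidAlgebra ℂ G := ((Real.sqrt N : ℂ))⁻¹ • f with hg
  have hnorminv : ‖((Real.sqrt N : ℂ))⁻¹‖ = (Real.sqrt N)⁻¹ := by
    rw [norm_inv, Complex.norm_real, Real.norm_of_nonneg (Real.sqrt_nonneg _)]
  have hl2g : l2norm g = 1 := by
    rw [hg, RDaux.l2norm_smul, hnorminv, hl2f, inv_mul_cancel₀ (ne_of_gt hsqrtNpos)]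
  -- coefficients of f * f
  set c : ℕ → ℕ := fun j =>
    ((Finset.Icc 1 N ×ˢ Finset.Icc 1 N).filter fun p => p.1 + p.2 = j).card with hc
  have hmaps : ∀ p ∈ Finset.Icc 1 N ×ˢ Finset.Icc 1 N,
      p.1 + p.2 ∈ Finset.Icc 2 (2 * N) := by
    intro p hp
    rw [Finset.mem_product, Finset.mem_Icc, Finset.mem_Icc] at hp
    rw [Finset.mem_Icc]; omega
  have hff : f * f = ∑ j ∈ Finset.Icc 2 (2 * N), MonoidAlgebra.single (γ ^ j) ((c j : ℂ)) := by
    rw [hf, Finset.sum_mul_sum]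
    have step1 : ∀ k l : ℕ, MonoidAlgebra.single (γ ^ k) (1 : ℂ) *
        MonoidAlgebra.single (γ ^ l) (1 : ℂ) = MonoidAlgebra.single (γ ^ (k + l)) (1 : ℂ) := by
      intro k l
      rw [MonoidAlgebra.single_mul_single, pow_add, one_mul]
    calc (∑ k ∈ Finset.Icc 1 N, ∑ l ∈ Finset.Icc 1 N,
          MonoidAlgebra.single (γ ^ k) (1 : ℂ) * MonoidAlgebra.single (γ ^ l) (1 : ℂ))
        = ∑ p ∈ Finset.Icc 1 N ×ˢ Finset.Icc 1 N,
            MonoidAlgebra.single (γ ^ (p.1 + p.2)) (1 : ℂ) := by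
          rw [Finset.sum_product]
          exact Finset.sum_congr rfl fun k _ => Finset.sum_congr rfl fun l _ => step1 k l
      _ = ∑ j ∈ Finset.Icc 2 (2 * N),
            ∑ p ∈ (Finset.Icc 1 N ×ˢ Finset.Icc 1 N).filter fun p => p.1 + p.2 = j,
              MonoidAlgebra.single (γ ^ (p.1 + p.2)) (1 : ℂ) :=
          (Finset.sum_fiberwise_of_maps_to hmaps _).symm
      _ = ∑ j ∈ Finset.Icc 2 (2 * N), MonoidAlgebra.single (γ ^ j) ((c j : ℂ)) := by
          refine Finset.sum_congr rfl fun j _ => ?_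
          have hcongr : ∀ p ∈ (Finset.Icc 1 N ×ˢ Finset.Icc 1 N).filter
              (fun p : ℕ × ℕ => p.1 + p.2 = j),
              MonoidAlgebra.single (γ ^ (p.1 + p.2)) (1 : ℂ)
                = MonoidAlgebra.single (γ ^ j) (1 : ℂ) := by
            intro p hp
            rw [Finset.mem_filter] at hp
            rw [hp.2]
          rw [Finset.sum_congr rfl hcongr, Finset.sum_const, MonoidAlgebra.smul_single]
          simp [hc]
  -- S2 (f * f)
  have hS2ff : RDaux.S2 (f * f) = ∑ j ∈ Finset.Icc 2 (2 * N), ((c j : ℝ)) ^ 2 := by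
    rw [hff, RDaux.S2_sum_single _ _ _ (hinjOn _)]
    refine Finset.sum_congr rfl fun j _ => ?_
    rw [Complex.norm_natCast]
  -- total mass of c
  have hsumc : ∑ j ∈ Finset.Icc 2 (2 * N), c j = N * N := by
    rw [hc]
    have := Finset.card_eq_sum_card_fiberwise hmaps
    rw [Finset.card_product, Nat.card_Icc] at this
    simp only [Nat.add_sub_cancel] at this
    exact this.symm
  -- Cauchy–Schwarz lower bound on ∑ c²
  have hCS : ((N : ℝ) ^ 4) ≤ 2 * N * ∑ j ∈ Finset.Icc 2 (2 * N), ((c j : ℝ)) ^ 2 := by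
    have h1 : (∑ j ∈ Finset.Icc 2 (2 * N), (c j : ℝ)) ^ 2 ≤
        (Finset.Icc 2 (2 * N)).card * ∑ j ∈ Finset.Icc 2 (2 * N), ((c j : ℝ)) ^ 2 :=
      sq_sum_le_card_mul_sum_sq
    have h2 : (∑ j ∈ Finset.Icc 2 (2 * N), (c j : ℝ)) = (N : ℝ) * N := by
      rw [← Nat.cast_sum, hsumc]; push_cast; ring
    have h3 : ((Finset.Icc 2 (2 * N)).card : ℝ) ≤ 2 * N := by
      have : (Finset.Icc 2 (2 * N)).card ≤ 2 * N := by rw [Nat.card_Icc]; omega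
      exact_mod_cast this
    have hnn : 0 ≤ ∑ j ∈ Finset.Icc 2 (2 * N), ((c j : ℝ)) ^ 2 :=
      Finset.sum_nonneg fun _ _ => sq_nonneg _
    calc ((N : ℝ) ^ 4) = ((N : ℝ) * N) ^ 2 := by ring
      _ ≤ (Finset.Icc 2 (2 * N)).card * ∑ j ∈ Finset.Icc 2 (2 * N), ((c j : ℝ)) ^ 2 := by
          rw [← h2]; exact h1
      _ ≤ 2 * N * ∑ j ∈ Finset.Icc 2 (2 * N), ((c j : ℝ)) ^ 2 :=
          mul_le_mul_of_nonneg_right h3 hnn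
  -- lower bound on opNorm
  have hlow : (N : ℝ) / Real.sqrt 2 ≤ opNorm f := by
    have hfg : f * g = ((Real.sqrt N : ℂ))⁻¹ • (f * f) := by
      rw [hg, mul_smul_comm]
    have hl2fg : l2norm (f * g) = (Real.sqrt N)⁻¹ * Real.sqrt (RDaux.S2 (f * f)) := by
      rw [hfg, RDaux.l2norm_smul, hnorminv, RDaux.l2norm_eq]
    have hle : (N : ℝ) / Real.sqrt 2 ≤ l2norm (f * g) := by
      rw [hl2fg, hS2ff]
      have h4 : (N : ℝ) ^ 4 / (2 * N) ≤ ∑ j ∈ Finset.Icc 2 (2 * N), ((c j : ℝ)) ^ 2 := by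
        rw [div_le_iff₀ (by positivity)]
        linarith [hCS]
      have h5 : Real.sqrt ((N : ℝ) ^ 4 / (2 * N)) ≤
          Real.sqrt (∑ j ∈ Finset.Icc 2 (2 * N), ((c j : ℝ)) ^ 2) := Real.sqrt_le_sqrt h4
      have h6 : Real.sqrt ((N : ℝ) ^ 4 / (2 * N)) =
          (N : ℝ) ^ 2 / (Real.sqrt 2 * Real.sqrt N) := by
        rw [show ((N : ℝ) ^ 4) = ((N : ℝ) ^ 2) ^ 2 by ring,
          Real.sqrt_div (sq_nonneg _), Real.sqrt_sq (by positivity),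
          Real.sqrt_mul (by norm_num : (0 : ℝ) ≤ 2)]
      have h7 : (Real.sqrt N)⁻¹ * ((N : ℝ) ^ 2 / (Real.sqrt 2 * Real.sqrt N)) =
          (N : ℝ) / Real.sqrt 2 := by
        have h2pos : 0 < Real.sqrt 2 := Real.sqrt_pos.mpr (by norm_num)
        have e1 : (Real.sqrt N)⁻¹ * ((N : ℝ) ^ 2 / (Real.sqrt 2 * Real.sqrt N)) =
            (N : ℝ) ^ 2 / (Real.sqrt 2 * (Real.sqrt N * Real.sqrt N)) := by
          field_simp
        rw [e1, hss, sq, mul_comm (Real.sqrt 2) ((N : ℝ)), ← div_div,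
          mul_div_assoc, div_self (ne_of_gt hNpos), mul_one]
      calc (N : ℝ) / Real.sqrt 2
          = (Real.sqrt N)⁻¹ * ((N : ℝ) ^ 2 / (Real.sqrt 2 * Real.sqrt N)) := h7.symm
        _ ≤ (Real.sqrt N)⁻¹ * Real.sqrt (∑ j ∈ Finset.Icc 2 (2 * N), ((c j : ℝ)) ^ 2) := by
            rw [← h6]
            exact mul_le_mul_of_nonneg_left h5 (by positivity)
    exact le_trans hle (RDaux.le_opNorm f g hl2g)
  -- upper bound on sobolevNorm
  set X : ℝ := 1 + C * Real.log ((N : ℝ) + 1) with hX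
  have hlogNN : 0 ≤ Real.log ((N : ℝ) + 1) := Real.log_nonneg (by linarith)
  have hX1 : (1 : ℝ) ≤ X := by
    rw [hX]; nlinarith
  have hXpos : (0 : ℝ) < X := by linarith
  have hsobolev : sobolevNorm ℓ s f ≤ Real.sqrt N * X ^ s := by
    have hterm : ∀ k ∈ Finset.Icc 1 N, (1 + ℓ (γ ^ k)) ^ (2 * s) ≤ X ^ (2 * s) := by
      intro k hk
      rw [Finset.mem_Icc] at hk
      have h1 : ℓ (γ ^ k) ≤ C * Real.log ((k : ℝ) + 1) := hdist k hk.1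
      have h2 : Real.log ((k : ℝ) + 1) ≤ Real.log ((N : ℝ) + 1) := by
        apply Real.log_le_log (by positivity)
        have : (k : ℝ) ≤ N := by exact_mod_cast hk.2
        linarith
      refine Real.rpow_le_rpow ?_ ?_ (by positivity)
      · have := hℓnn (γ ^ k); linarith
      · rw [hX]; nlinarith
    have hsum : ∑ y ∈ f.coeff.support, ‖f.coeff y‖ ^ 2 * (1 + ℓ y) ^ (2 * s)
        = ∑ k ∈ Finset.Icc 1 N, ‖(1 : ℂ)‖ ^ 2 * (1 + ℓ (γ ^ k)) ^ (2 * s) := by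
      rw [hf]
      exact RDaux.weighted_sum_single _ _ _ (hinjOn _)
        (fun y => (1 + ℓ y) ^ (2 * s)) (fun y => Real.rpow_nonneg (by linarith [hℓnn y]) _)
    have hsum2 : ∑ k ∈ Finset.Icc 1 N, ‖(1 : ℂ)‖ ^ 2 * (1 + ℓ (γ ^ k)) ^ (2 * s)
        ≤ (N : ℝ) * X ^ (2 * s) := by
      calc ∑ k ∈ Finset.Icc 1 N, ‖(1 : ℂ)‖ ^ 2 * (1 + ℓ (γ ^ k)) ^ (2 * s)
          ≤ ∑ k ∈ Finset.Icc 1 N, X ^ (2 * s) := by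
            refine Finset.sum_le_sum fun k hk => ?_
            rw [norm_one, one_pow, one_mul]
            exact hterm k hk
        _ = (N : ℝ) * X ^ (2 * s) := by
            rw [Finset.sum_const, Nat.card_Icc, Nat.add_sub_cancel, nsmul_eq_mul]
    have hx2s : Real.sqrt (X ^ (2 * s)) = X ^ s := by
      rw [Real.sqrt_eq_rpow, ← Real.rpow_mul (le_of_lt hXpos),
        show (2 * s) * ((1 : ℝ)/2) = s by ring]
    calc sobolevNorm ℓ s f = Real.sqrt (∑ y ∈ f.coeff.support, ‖f.coeff y‖ ^ 2 * (1 + ℓ y) ^ (2 * s)) := rfl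
      _ ≤ Real.sqrt ((N : ℝ) * X ^ (2 * s)) := Real.sqrt_le_sqrt (by rw [hsum]; exact hsum2)
      _ = Real.sqrt N * X ^ s := by
          rw [Real.sqrt_mul (le_of_lt hNpos), hx2s]
  -- the distortion bound : X ^ s ≤ A ^ s * N ^ (1/4)
  have hXA : X ^ s ≤ A ^ s * (N : ℝ) ^ ((1 : ℝ)/4) := by
    have hNε1 : (1 : ℝ) ≤ (N : ℝ) ^ ε := by
      rw [← Real.one_rpow ε]
      exact Real.rpow_le_rpow zero_le_one hNR1 (le_of_lt hεpos)
    have hlog : Real.log ((N : ℝ) + 1) ≤ ((N : ℝ) + 1) ^ ε / ε := by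
      have hpos : (0 : ℝ) < (N : ℝ) + 1 := by linarith
      have h1 : Real.log (((N : ℝ) + 1) ^ ε) = ε * Real.log ((N : ℝ) + 1) :=
        Real.log_rpow hpos ε
      have h2 := Real.log_le_sub_one_of_pos (Real.rpow_pos_of_pos hpos ε)
      rw [h1] at h2
      rw [le_div_iff₀ hεpos]
      nlinarith [h2]
    have hNp1 : ((N : ℝ) + 1) ^ ε ≤ 2 ^ ε * (N : ℝ) ^ ε := by
      rw [← Real.mul_rpow (by norm_num) (le_of_lt hNpos)]
      exact Real.rpow_le_rpow (by linarith) (by linarith) (le_of_lt hεpos)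
    have hXAN : X ≤ A * (N : ℝ) ^ ε := by
      rw [hX, hA]
      have h4 : Real.log ((N : ℝ) + 1) ≤ 2 ^ ε * (N : ℝ) ^ ε / ε :=
        le_trans hlog ((div_le_div_iff_of_pos_right hεpos).mpr hNp1)
      have h5 : C * Real.log ((N : ℝ) + 1) ≤ C * (2 ^ ε * (N : ℝ) ^ ε / ε) :=
        mul_le_mul_of_nonneg_left h4 (le_of_lt hC)
      calc 1 + C * Real.log ((N : ℝ) + 1) ≤ 1 + C * (2 ^ ε * (N : ℝ) ^ ε / ε) := by linarith
        _ ≤ (N : ℝ) ^ ε + C * (2 ^ ε * (N : ℝ) ^ ε / ε) := by linarith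
        _ = (1 + C * 2 ^ ε / ε) * (N : ℝ) ^ ε := by ring
    calc X ^ s ≤ (A * (N : ℝ) ^ ε) ^ s :=
          Real.rpow_le_rpow (le_of_lt hXpos) hXAN (le_of_lt hs)
      _ = A ^ s * ((N : ℝ) ^ ε) ^ s :=
          Real.mul_rpow (le_of_lt hApos) (Real.rpow_nonneg (le_of_lt hNpos) ε)
      _ = A ^ s * (N : ℝ) ^ ((1 : ℝ)/4) := by
          rw [← Real.rpow_mul (le_of_lt hNpos) ε s, hεs]
  -- put it together
  set P : ℝ := (N : ℝ) ^ ((1 : ℝ)/4) with hP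
  have hPB : B < P := by
    calc B = (B ^ 4) ^ ((1 : ℝ)/4) := by
          rw [← Real.rpow_natCast B 4, ← Real.rpow_mul (le_of_lt hBpos)]
          norm_num
      _ < P := Real.rpow_lt_rpow (by positivity) hNB (by norm_num)
  have hPpos : 0 < P := lt_trans hBpos hPB
  have hP2 : P * P = Real.sqrt N := by
    rw [hP, Real.sqrt_eq_rpow, ← Real.rpow_add hNpos]
    norm_num
  have hP4 : P * P * (P * P) = (N : ℝ) := by
    rw [hP, ← Real.rpow_add hNpos, ← Real.rpow_add hNpos,
      show (1 : ℝ)/4 + 1/4 + (1/4 + 1/4) = 1 by norm_num, Real.rpow_one]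
  -- final contradiction
  have hchain : (N : ℝ) / Real.sqrt 2 ≤ C' * (Real.sqrt N * (A ^ s * P)) := by
    calc (N : ℝ) / Real.sqrt 2 ≤ opNorm f := hlow
      _ ≤ C' * sobolevNorm ℓ s f := hRD f
      _ ≤ C' * (Real.sqrt N * X ^ s) :=
          mul_le_mul_of_nonneg_left hsobolev (le_of_lt hC')
      _ ≤ C' * (Real.sqrt N * (A ^ s * P)) := by
          refine mul_le_mul_of_nonneg_left ?_ (le_of_lt hC')
          exact mul_le_mul_of_nonneg_left hXA (Real.sqrt_nonneg _)
  have hsqrt2 : 0 < Real.sqrt 2 := Real.sqrt_pos.mpr (by norm_num)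
  have hs2 : Real.sqrt 2 * Real.sqrt 2 = 2 := Real.mul_self_sqrt (by norm_num)
  -- N / √2 ≤ C' √N A^s P  ⇒  N ≤ √2 C' A^s P √N = B P ⬝ P² = B P³ < P⁴ = N
  have hfinal : (N : ℝ) < (N : ℝ) := by
    have h1 : (N : ℝ) ≤ Real.sqrt 2 * C' * (Real.sqrt N * (A ^ s * P)) := by
      rw [div_le_iff₀ hsqrt2] at hchain
      nlinarith [hchain, hsqrt2]
    have h2 : Real.sqrt 2 * C' * (Real.sqrt N * (A ^ s * P)) = B * (P * P * P) := by
      rw [hB, ← hP2]; ring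
    have h3 : B * (P * P * P) < P * (P * P * P) := by
      have : 0 < P * P * P := by positivity
      exact mul_lt_mul_of_pos_right hPB this
    calc (N : ℝ) ≤ B * (P * P * P) := by rw [← h2]; exact h1
      _ < P * (P * P * P) := h3
      _ = (N : ℝ) := by rw [← hP4]; ring
  exact lt_irrefl _ hfinal
end
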